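/- arXiv:2107.11969 — 2 statements merged into one kernel-verified Lean document; each statement's English description precedes it below -/
import Mathlib

section
/- For Re(μ) > 0 and every natural number n, ∫_0^1 x^{μ−1} P_n(2x−1) dx = Γ(μ)² / ( Γ(μ+n+1) Γ(μ−n) ). -/
open Complex Real

noncomputable def hyp2F1 (a b c z : ℂ) : ℂ :=
  ∑' n : ℕ, (ascPochhammer ℂ n).eval a * (ascPochhammer ℂ n).eval b /
    ((ascPochhammer ℂ n).eval c * (n.factorial : ℂ)) * z ^ n

/-- Legendre function of complex degree ν, for real argument in [-1,1]. -/
noncomputable def legendreFn (ν : ℂ) (x : ℝ) : ℂ :=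
  hyp2F1 (-ν) (ν + 1) 1 ((1 - (x : ℂ)) / 2)

/-- Legendre polynomial of degree n. -/
noncomputable def legendreP (n : ℕ) (x : ℝ) : ℝ :=
  ∑ k ∈ Finset.range (n + 1),
    (n.choose k : ℝ) * ((n + k).choose k : ℝ) * ((x - 1) / 2) ^ k

/-- Complete elliptic integral of the first kind, elliptic-modulus convention. -/
noncomputable def ellipticK (x : ℝ) : ℝ :=
  ∫ u in (0:ℝ)..(π / 2), (1 - x * Real.sin u ^ 2) ^ (-(1/2 : ℝ))

section MomentAux
open Finset

lemma alt_sum_choose : ∀ (m : ℕ) (n a : ℕ), m ≤ n →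
    ∑ j ∈ range (m+1), (-1:ℤ)^j * (m.choose j) * ((a+j).choose n) =
      (-1)^m * (a.choose (n-m)) := by
  intro m
  induction m with
  | zero => intro n a _; simp
  | succ m ih =>
    intro n a hm
    have hmn : m ≤ n := Nat.le_of_succ_le hm
    have ihA := ih n (a+1) hmn
    have ihB := ih n a hmn
    rw [Finset.sum_range_succ'] at ihB ⊢
    have h1 : ∀ j ∈ range (m+1), (-1:ℤ)^(j+1) * ((m+1).choose (j+1)) * ((a+(j+1)).choose n)
        = -((-1:ℤ)^j * (m.choose j) * ((a+1+j).choose n))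
          - ((-1:ℤ)^(j+1) * (m.choose (j+1)) * ((a+(j+1)).choose n)) * (-1) := by
      intro j _
      have e : a + (j+1) = a+1+j := by omega
      rw [Nat.choose_succ_succ]
      push_cast
      rw [e]
      ring
    rw [Finset.sum_congr rfl h1, Finset.sum_sub_distrib, ← Finset.sum_mul]
    have hA2 : ∑ j ∈ range (m+1), -((-1:ℤ)^j * (m.choose j) * ((a+1+j).choose n))
        = -((-1:ℤ)^m * ((a+1).choose (n-m))) := by
      rw [Finset.sum_neg_distrib, ihA]
    have hB : ∑ j ∈ range (m+1), (-1:ℤ)^(j+1) * (m.choose (j+1)) * ((a+(j+1)).choose n)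
        = ∑ j ∈ range m, (-1:ℤ)^(j+1) * (m.choose (j+1)) * ((a+(j+1)).choose n) := by
      rw [Finset.sum_range_succ]
      simp [Nat.choose_succ_self]
    have hsub : ∑ j ∈ range (m+1), (-1:ℤ)^(j+1) * (m.choose (j+1)) * ((a+(j+1)).choose n)
        = (-1)^m * (a.choose (n-m)) - ((-1:ℤ)^0 * (m.choose 0) * ((a+0).choose n)) := by
      rw [hB]; linarith [ihB]
    have e4 : n - m = (n-(m+1)) + 1 := by omega
    have hpN : (a+1).choose (n-m) = a.choose (n-(m+1)) + a.choose (n-m) := by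
      rw [e4, Nat.choose_succ_succ]
    have hpascal : (((a+1).choose (n-m)) : ℤ) = a.choose (n-(m+1)) + a.choose (n-m) := by
      exact_mod_cast congrArg (Nat.cast : ℕ → ℤ) hpN
    rw [hA2, hsub, hpascal]
    simp only [Nat.choose_zero_right, pow_zero, Nat.add_zero]
    push_cast
    ring

lemma key_choose (n i : ℕ) (hi : i ≤ n) :
    ∑ k ∈ range (n+1), (-1:ℤ)^k * (n.choose k) * (k.choose i) * ((n+k).choose k) =
      (-1)^n * (n.choose i) * ((n+i).choose i) := by
  -- terms with k < i vanish
  have hsplit : ∑ k ∈ range (n+1), (-1:ℤ)^k * (n.choose k) * (k.choose i) * ((n+k).choose k)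
      = ∑ k ∈ Ico i (n+1), (-1:ℤ)^k * (n.choose k) * (k.choose i) * ((n+k).choose k) := by
    rw [range_eq_Ico, ← Finset.sum_Ico_consecutive _ (Nat.zero_le i) (by omega)]
    have : ∑ k ∈ Ico 0 i, (-1:ℤ)^k * (n.choose k) * (k.choose i) * ((n+k).choose k) = 0 := by
      apply Finset.sum_eq_zero
      intro k hk
      rw [Finset.mem_Ico] at hk
      rw [Nat.choose_eq_zero_of_lt hk.2]
      simp
    rw [this, zero_add]
  rw [hsplit, Finset.sum_Ico_eq_sum_range]
  have hm : n + 1 - i = (n - i) + 1 := by omega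
  rw [hm]
  have hterm : ∀ j ∈ range ((n-i)+1),
      (-1:ℤ)^(i+j) * (n.choose (i+j)) * ((i+j).choose i) * ((n+(i+j)).choose (i+j))
      = ((-1:ℤ)^i * (n.choose i)) * ((-1:ℤ)^j * ((n-i).choose j) * (((n+i)+j).choose n)) := by
    intro j hj
    rw [Finset.mem_range] at hj
    have hkn : i + j ≤ n := by omega
    have h1 : (n.choose (i+j)) * ((i+j).choose i) = n.choose i * ((n-i).choose j) := by
      have := Nat.choose_mul (n := n) (Nat.le_add_right i j)
      simpa [Nat.add_sub_cancel_left] using this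
    have h2 : (n+(i+j)).choose (i+j) = ((n+i)+j).choose n := by
      have h3 : n + (i+j) = (n+i)+j := by omega
      have h4 : (n+i+j) - n = i + j := by omega
      rw [h3, ← h4, Nat.choose_symm (by omega)]
    rw [h2]
    have h1' : ((n.choose (i+j)) * ((i+j).choose i) : ℤ) = (n.choose i : ℤ) * ((n-i).choose j) := by
      exact_mod_cast congrArg (Nat.cast : ℕ → ℤ) h1
    push_cast at h1' ⊢
    rw [pow_add]
    linear_combination ((-1:ℤ)^i * (-1:ℤ)^j * (((n+i)+j).choose n : ℤ)) * h1'
  rw [Finset.sum_congr rfl hterm, ← Finset.mul_sum, alt_sum_choose (n-i) n (n+i) (by omega)]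
  have : n - (n - i) = i := by omega
  rw [this]
  have : (-1:ℤ)^i * (-1:ℤ)^(n-i) = (-1)^n := by
    rw [← pow_add]
    congr 1
    omega
  push_cast
  linear_combination ((n.choose i : ℤ) * (((n+i)).choose i : ℤ)) * this

lemma fact_prod (a : ℕ) : ∀ m : ℕ, Nat.factorial a * ∏ j ∈ range m, (a+1+j) = Nat.factorial (a+m) := by
  intro m
  induction m with
  | zero => simp
  | succ m ih =>
    rw [Finset.prod_range_succ, ← mul_assoc, ih]
    have : a + (m+1) = (a+m) + 1 := by omega
    rw [this, Nat.factorial_succ]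
    ring

lemma evalkey (n i : ℕ) (hi : i ≤ n) :
    ∑ k ∈ range (n+1), (-1:ℤ)^k * (n.choose k) * ((n+k).choose k) *
        (Nat.factorial (k) * ∏ j ∈ Ico (k+1) (n+1), ((j:ℤ) - (i:ℤ))) =
      (-1)^n * ((n+i).choose i) * Nat.factorial (n) := by
  have hterm : ∀ k ∈ range (n+1), (Nat.factorial (k) : ℤ) * ∏ j ∈ Ico (k+1) (n+1), ((j:ℤ) - (i:ℤ))
      = ((k.choose i) * (Nat.factorial (i) * Nat.factorial (n-i)) : ℕ) := by
    intro k hk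
    rw [Finset.mem_range] at hk
    rcases lt_or_ge k i with hki | hik
    · have hmem : i ∈ Ico (k+1) (n+1) := by simp [Finset.mem_Ico]; omega
      rw [Finset.prod_eq_zero hmem (by ring), Nat.choose_eq_zero_of_lt hki]
      simp
    · -- cast the product to ℕ
      have hcast : ∏ j ∈ Ico (k+1) (n+1), ((j:ℤ) - (i:ℤ))
          = ((∏ j ∈ Ico (k+1) (n+1), (j - i) : ℕ) : ℤ) := by
        rw [Nat.cast_prod]
        apply Finset.prod_congr rfl
        intro j hj
        rw [Finset.mem_Ico] at hj
        have : i ≤ j := by omega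
        push_cast [this]
        ring
      have hnat : Nat.factorial (k) * ∏ j ∈ Ico (k+1) (n+1), (j - i) = (k.choose i) * (Nat.factorial (i) * Nat.factorial (n-i)) := by
        have hP : ∏ j ∈ Ico (k+1) (n+1), (j - i) = ∏ j ∈ range (n-k), ((k-i)+1+j) := by
          rw [Finset.prod_Ico_eq_prod_range]
          have e : n + 1 - (k+1) = n - k := by omega
          rw [e]
          apply Finset.prod_congr rfl
          intro j _
          omega
        have hfp := fact_prod (k-i) (n-k)
        have e2 : (k-i) + (n-k) = n - i := by omega
        rw [e2] at hfp
        have hkf : Nat.factorial (k) = k.choose i * Nat.factorial (i) * Nat.factorial (k-i) := (Nat.choose_mul_factorial_mul_factorial hik).symm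
        rw [hP, hkf]
        calc k.choose i * Nat.factorial (i) * Nat.factorial (k-i) * ∏ j ∈ range (n-k), ((k-i)+1+j)
            = k.choose i * Nat.factorial (i) * (Nat.factorial (k-i) * ∏ j ∈ range (n-k), ((k-i)+1+j)) := by ring
          _ = k.choose i * Nat.factorial (i) * Nat.factorial (n-i) := by rw [hfp]
          _ = k.choose i * (Nat.factorial (i) * Nat.factorial (n-i)) := by ring
      rw [hcast, ← Nat.cast_mul]
      exact_mod_cast congrArg (Nat.cast : ℕ → ℤ) hnat
  calc ∑ k ∈ range (n+1), (-1:ℤ)^k * (n.choose k) * ((n+k).choose k) *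
        (Nat.factorial (k) * ∏ j ∈ Ico (k+1) (n+1), ((j:ℤ) - (i:ℤ)))
      = ∑ k ∈ range (n+1), (Nat.factorial (i) * Nat.factorial (n-i) : ℤ) *
          ((-1:ℤ)^k * (n.choose k) * (k.choose i) * ((n+k).choose k)) := by
        apply Finset.sum_congr rfl
        intro k hk
        rw [show (-1:ℤ)^k * (n.choose k) * ((n+k).choose k) *
            (Nat.factorial (k) * ∏ j ∈ Ico (k+1) (n+1), ((j:ℤ) - (i:ℤ)))
          = (-1:ℤ)^k * (n.choose k) * ((n+k).choose k) *
            ((Nat.factorial (k):ℤ) * ∏ j ∈ Ico (k+1) (n+1), ((j:ℤ) - (i:ℤ))) from by ring, hterm k hk]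
        push_cast
        ring
    _ = (Nat.factorial (i) * Nat.factorial (n-i) : ℤ) * ∑ k ∈ range (n+1),
          ((-1:ℤ)^k * (n.choose k) * (k.choose i) * ((n+k).choose k)) := by
        rw [Finset.mul_sum]
    _ = (-1)^n * ((n+i).choose i) * Nat.factorial (n) := by
        rw [key_choose n i hi]
        have hni : (Nat.factorial (i) * Nat.factorial (n-i) * (n.choose i) : ℤ) = Nat.factorial (n) := by
          exact_mod_cast congrArg (Nat.cast : ℕ → ℤ)
            (show Nat.factorial (i) * Nat.factorial (n-i) * (n.choose i) = Nat.factorial (n) from by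
              rw [show Nat.factorial (i) * Nat.factorial (n-i) * (n.choose i) = n.choose i * Nat.factorial (i) * Nat.factorial (n-i) from by ring]
              exact Nat.choose_mul_factorial_mul_factorial hi)
        push_cast
        linear_combination ((-1:ℤ)^n * ((n+i).choose i : ℤ)) * hni

lemma evalq (n i : ℕ) :
    ∏ j ∈ Ico 1 (n+1), (-(i:ℤ) - (j:ℤ)) = (-1)^n * ((n+i).choose i) * Nat.factorial n := by
  have h1 : ∀ j ∈ Ico 1 (n+1), (-(i:ℤ) - (j:ℤ)) = (-1) * ((i+j : ℕ) : ℤ) := by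
    intro j _; push_cast; ring
  rw [Finset.prod_congr rfl h1, Finset.prod_mul_distrib, Finset.prod_const, ← Nat.cast_prod]
  have hcard : #(Ico 1 (n+1)) = n := by simp
  have hnat : ∏ j ∈ Ico 1 (n+1), (i+j) = ((n+i).choose i) * Nat.factorial n := by
    have h2 : ∏ j ∈ Ico 1 (n+1), (i+j) = ∏ j ∈ range n, (i+1+j) := by
      rw [Finset.prod_Ico_eq_prod_range]
      simp only [Nat.add_sub_cancel]
      apply Finset.prod_congr rfl
      intro j _
      omega
    have hfp := fact_prod i n
    rw [← h2] at hfp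
    have hch : (n+i).choose i * Nat.factorial i * Nat.factorial n = Nat.factorial (n+i) := by
      have := Nat.choose_mul_factorial_mul_factorial (show i ≤ n+i by omega)
      simpa [Nat.add_sub_cancel] using this
    apply Nat.eq_of_mul_eq_mul_left (Nat.factorial_pos i)
    rw [hfp]
    rw [show Nat.factorial i * ((n+i).choose i * Nat.factorial n)
      = (n+i).choose i * Nat.factorial i * Nat.factorial n from by ring, hch]
    congr 1
    omega
  rw [hcard, hnat]
  push_cast
  ring

open Polynomial in
lemma polyid (n : ℕ) (μ : ℂ) :
    ∑ k ∈ range (n+1), ((-1:ℂ)^k * (n.choose k) * ((n+k).choose k) * (Nat.factorial k)) *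
      ∏ j ∈ Ico (k+1) (n+1), (μ + (j:ℂ)) = ∏ j ∈ Ico 1 (n+1), (μ - (j:ℂ)) := by
  set p : ℂ[X] := ∑ k ∈ range (n+1),
      C ((-1:ℂ)^k * (n.choose k) * ((n+k).choose k) * (Nat.factorial k)) *
      ∏ j ∈ Ico (k+1) (n+1), (X + C (j:ℂ)) with hp
  set q : ℂ[X] := ∏ j ∈ Ico 1 (n+1), (X - C (j:ℂ)) with hq
  have hdp : p.natDegree ≤ n := by
    apply natDegree_sum_le_of_forall_le
    intro k _
    refine le_trans (natDegree_mul_le) ?_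
    rw [natDegree_C]
    refine le_trans (by simp : 0 + (∏ j ∈ Ico (k+1) (n+1), (X + C (j:ℂ))).natDegree
      ≤ (∏ j ∈ Ico (k+1) (n+1), (X + C (j:ℂ))).natDegree) ?_
    refine le_trans (natDegree_prod_le _ _) ?_
    calc ∑ j ∈ Ico (k+1) (n+1), (X + C (j:ℂ)).natDegree
        = ∑ j ∈ Ico (k+1) (n+1), 1 := by
          apply Finset.sum_congr rfl; intro j _; exact natDegree_X_add_C _
      _ ≤ n := by simp [Nat.card_Ico]
  have hdq : q.natDegree ≤ n := by
    refine le_trans (natDegree_prod_le _ _) ?_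
    calc ∑ j ∈ Ico 1 (n+1), (X - C (j:ℂ)).natDegree
        = ∑ j ∈ Ico 1 (n+1), 1 := by
          apply Finset.sum_congr rfl; intro j _; exact natDegree_X_sub_C _
      _ ≤ n := by simp [Nat.card_Ico]
  have heval : ∀ i : Fin (n+1), (p - q).eval (-((i:ℕ):ℂ)) = 0 := by
    intro i
    have hi : (i:ℕ) ≤ n := by omega
    rw [eval_sub, sub_eq_zero]
    have hP : p.eval (-((i:ℕ):ℂ)) = ∑ k ∈ range (n+1),
        ((-1:ℂ)^k * (n.choose k) * ((n+k).choose k) * (Nat.factorial k)) *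
        ∏ j ∈ Ico (k+1) (n+1), (-((i:ℕ):ℂ) + (j:ℂ)) := by
      rw [hp, eval_finset_sum]
      apply Finset.sum_congr rfl
      intro k _
      rw [eval_mul, eval_C, eval_prod]
      congr 1
      apply Finset.prod_congr rfl
      intro j _
      simp
    have hQ : q.eval (-((i:ℕ):ℂ)) = ∏ j ∈ Ico 1 (n+1), (-((i:ℕ):ℂ) - (j:ℂ)) := by
      rw [hq, eval_prod]
      apply Finset.prod_congr rfl
      intro j _
      simp
    rw [hP, hQ]
    -- cast from ℤ
    have hk := congrArg (Int.cast : ℤ → ℂ) (evalkey n i hi)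
    have hqq := congrArg (Int.cast : ℤ → ℂ) (evalq n i)
    push_cast at hk hqq
    rw [← hqq] at hk
    rw [← hk]
    apply Finset.sum_congr rfl
    intro k _
    have hprod : ∏ j ∈ Ico (k+1) (n+1), (-((i:ℕ):ℂ) + (j:ℂ))
        = ∏ j ∈ Ico (k+1) (n+1), ((j:ℂ) - ((i:ℕ):ℂ)) :=
      Finset.prod_congr rfl (fun j _ => by ring)
    rw [hprod]
    ring
  have hpq : p = q := by
    rw [← sub_eq_zero]
    apply Polynomial.eq_zero_of_natDegree_lt_card_of_eval_eq_zero (p - q)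
      (f := fun i : Fin (n+1) => -((i:ℕ):ℂ))
    · intro a b hab
      simp only [neg_inj, Nat.cast_inj] at hab
      exact Fin.ext hab
    · exact heval
    · calc (p - q).natDegree ≤ max p.natDegree q.natDegree := natDegree_sub_le p q
        _ ≤ n := by omega
        _ < Fintype.card (Fin (n+1)) := by simp
  have := congrArg (eval μ) hpq
  rw [hp, hq, eval_finset_sum, eval_prod] at this
  calc ∑ k ∈ range (n+1), ((-1:ℂ)^k * (n.choose k) * ((n+k).choose k) * (Nat.factorial k)) *
      ∏ j ∈ Ico (k+1) (n+1), (μ + (j:ℂ))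
      = ∑ k ∈ range (n+1), eval μ (C ((-1:ℂ)^k * (n.choose k) * ((n+k).choose k) * (Nat.factorial k)) *
        ∏ j ∈ Ico (k+1) (n+1), (X + C (j:ℂ))) := by
        apply Finset.sum_congr rfl
        intro k _
        rw [eval_mul, eval_C, eval_prod]
        congr 1
        apply Finset.prod_congr rfl
        intro j _
        simp
    _ = ∏ j ∈ Ico 1 (n+1), (μ - (j:ℂ)) := by
        rw [this]
        apply Finset.prod_congr rfl
        intro j _
        simp

lemma Gamma_prod (z : ℂ) (hz : Complex.Gamma z ≠ 0) (m : ℕ) :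
    Complex.Gamma (z + m) = Complex.Gamma z * ∏ j ∈ range m, (z + j) := by
  induction m with
  | zero => simp
  | succ m ih =>
    have hzm : z + m ≠ 0 := by
      intro h
      apply hz
      rw [Complex.Gamma_eq_zero_iff]
      exact ⟨m, by linear_combination h⟩
    rw [show ((m+1:ℕ):ℂ) = (m:ℂ)+1 from by push_cast; ring,
      show z + ((m:ℂ)+1) = (z + m) + 1 from by ring,
      Complex.Gamma_add_one _ hzm, ih, Finset.prod_range_succ]
    ring

lemma gamma_ratio (μ : ℂ) (hμ : 0 < μ.re) (n k : ℕ) (hk : k ≤ n) :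
    Complex.Gamma (μ + n + 1) =
      Complex.Gamma (μ + k + 1) * ∏ j ∈ Ico (k+1) (n+1), (μ + j) := by
  have hz : Complex.Gamma (μ + k + 1) ≠ 0 := by
    apply Complex.Gamma_ne_zero_of_re_pos
    have : (μ + k + 1).re = μ.re + (k + 1) := by
      simp [Complex.add_re, Complex.natCast_re]; ring
    rw [this]
    have : (0:ℝ) ≤ k := Nat.cast_nonneg k
    linarith
  have h := Gamma_prod (μ + k + 1) hz (n - k)
  rw [show μ + (k:ℂ) + 1 + ((n-k:ℕ):ℂ) = μ + n + 1 from by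
    push_cast [Nat.cast_sub hk]; ring] at h
  rw [h]
  congr 1
  rw [Finset.prod_Ico_eq_prod_range]
  have e : n + 1 - (k+1) = n - k := by omega
  rw [e]
  apply Finset.prod_congr rfl
  intro j _
  push_cast
  ring

lemma prod_shift_eq (μ : ℂ) : ∀ n : ℕ, ∏ j ∈ range n, (μ - n + j) = ∏ j ∈ Ico 1 (n+1), (μ - j) := by
  intro n
  induction n with
  | zero => simp
  | succ n ih =>
    rw [Finset.prod_range_succ']
    have h1 : ∀ j ∈ range n, μ - ((n+1:ℕ):ℂ) + ((j+1:ℕ):ℂ) = μ - n + j := by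
      intro j _; push_cast; ring
    rw [Finset.prod_congr rfl h1, ih, Finset.prod_Ico_succ_top (by omega : 1 ≤ n+1)]
    push_cast
    ring

lemma inv_gamma_sub (μ : ℂ) (hμ : 0 < μ.re) (n : ℕ) :
    (Complex.Gamma (μ - n))⁻¹ = (∏ j ∈ Ico 1 (n+1), (μ - j)) / Complex.Gamma μ := by
  rcases eq_or_ne (Complex.Gamma (μ - n)) 0 with h | h
  · rw [h, inv_zero]
    rw [Complex.Gamma_eq_zero_iff] at h
    obtain ⟨m, hm⟩ := h
    have hμ2 : μ = (n:ℂ) - m := by linear_combination hm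
    have hmn : m < n := by
      have h1 : μ.re = (n:ℝ) - m := by
        rw [hμ2]; simp [Complex.sub_re, Complex.natCast_re]
      have h2 : (m:ℝ) < n := by linarith
      exact_mod_cast h2
    have hmem : n - m ∈ Ico 1 (n+1) := by
      rw [Finset.mem_Ico]; omega
    have hzero : μ - ((n - m : ℕ):ℂ) = 0 := by
      push_cast [Nat.cast_sub hmn.le]
      linear_combination hμ2
    rw [Finset.prod_eq_zero hmem hzero, zero_div]
  · have hfin := Gamma_prod (μ - n) h n
    rw [show μ - (n:ℂ) + (n:ℂ) = μ from by ring] at hfin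
    rw [prod_shift_eq μ n] at hfin
    have hP : (∏ j ∈ Ico 1 (n+1), (μ - j)) ≠ 0 := by
      intro hc
      have := Complex.Gamma_ne_zero_of_re_pos hμ
      rw [hfin, hc, mul_zero] at this
      exact this rfl
    rw [hfin]
    field_simp

end MomentAux

open Finset in
theorem moment_legendreP (μ : ℂ) (hμ : 0 < μ.re) (n : ℕ) :
    ∫ x in (0:ℝ)..1, (x : ℂ) ^ (μ - 1) * (legendreP n (2 * x - 1) : ℂ) =
      Complex.Gamma μ ^ 2 / (Complex.Gamma (μ + n + 1) * Complex.Gamma (μ - n)) := by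
  have hΓμ : Complex.Gamma μ ≠ 0 := Complex.Gamma_ne_zero_of_re_pos hμ
  have hre : ∀ k : ℕ, 0 < (μ + k + 1).re := by
    intro k
    have h1 : (μ + k + 1).re = μ.re + (k + 1) := by
      simp [Complex.add_re, Complex.natCast_re]; ring
    rw [h1]
    have : (0:ℝ) ≤ k := Nat.cast_nonneg k
    linarith
  have hΓk : ∀ k : ℕ, Complex.Gamma (μ + k + 1) ≠ 0 :=
    fun k => Complex.Gamma_ne_zero_of_re_pos (hre k)
  have hkre : ∀ k : ℕ, 0 < ((k:ℂ)+1).re := by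
    intro k
    simp [Complex.add_re, Complex.natCast_re]
    positivity
  -- integrability of each term
  have hint : ∀ k : ℕ, IntervalIntegrable (fun x:ℝ => (x:ℂ)^(μ-1) * ((x:ℂ)-1)^k)
      MeasureTheory.volume 0 1 := by
    intro k
    have h := Complex.betaIntegral_convergent hμ (hkre k)
    simp only [add_sub_cancel_right, Complex.cpow_natCast] at h
    have hfun : (fun x:ℝ => (x:ℂ)^(μ-1) * ((x:ℂ)-1)^k)
        = fun x:ℝ => (-1:ℂ)^k * ((x:ℂ)^(μ-1) * (1-(x:ℂ))^k) := by
      funext x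
      rw [show ((x:ℂ)-1) = -(1-(x:ℂ)) from by ring, neg_pow]
      ring
    rw [hfun]
    exact h.const_mul _
  -- pointwise expansion
  have hexp : ∀ x:ℝ, (x:ℂ)^(μ-1) * (legendreP n (2*x-1) : ℂ)
      = ∑ k ∈ range (n+1), ((n.choose k:ℂ) * ((n+k).choose k:ℂ)) *
          ((x:ℂ)^(μ-1) * ((x:ℂ)-1)^k) := by
    intro x
    rw [legendreP]
    push_cast
    rw [Finset.mul_sum]
    apply Finset.sum_congr rfl
    intro k _
    rw [show ((2*(x:ℂ) - 1 - 1)/2) = (x:ℂ) - 1 from by ring]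
    ring
  -- value of each integral
  have hbk : ∀ k:ℕ, (∫ x in (0:ℝ)..1, (x:ℂ)^(μ-1) * ((x:ℂ)-1)^k)
      = (-1:ℂ)^k * Complex.betaIntegral μ ((k:ℂ)+1) := by
    intro k
    rw [Complex.betaIntegral, ← intervalIntegral.integral_const_mul]
    apply intervalIntegral.integral_congr
    intro x _
    simp only [add_sub_cancel_right, Complex.cpow_natCast]
    rw [show ((x:ℂ)-1) = -(1-(x:ℂ)) from by ring, neg_pow]
    ring
  have hbeta : ∀ k:ℕ, Complex.betaIntegral μ ((k:ℂ)+1)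
      = Complex.Gamma μ * (Nat.factorial k) / Complex.Gamma (μ + k + 1) := by
    intro k
    have h := Complex.Gamma_mul_Gamma_eq_betaIntegral hμ (hkre k)
    rw [show μ + ((k:ℂ)+1) = μ + k + 1 from by ring] at h
    rw [Complex.Gamma_nat_eq_factorial k] at h
    rw [eq_div_iff (hΓk k)]
    linear_combination -h
  calc ∫ x in (0:ℝ)..1, (x : ℂ) ^ (μ - 1) * (legendreP n (2 * x - 1) : ℂ)
      = ∫ x in (0:ℝ)..1, ∑ k ∈ range (n+1), ((n.choose k:ℂ) * ((n+k).choose k:ℂ)) *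
          ((x:ℂ)^(μ-1) * ((x:ℂ)-1)^k) := by
        apply intervalIntegral.integral_congr
        intro x _
        exact hexp x
    _ = ∑ k ∈ range (n+1), ∫ x in (0:ℝ)..1, ((n.choose k:ℂ) * ((n+k).choose k:ℂ)) *
          ((x:ℂ)^(μ-1) * ((x:ℂ)-1)^k) := by
        apply intervalIntegral.integral_finset_sum
        intro k _
        exact (hint k).const_mul _
    _ = ∑ k ∈ range (n+1), ((n.choose k:ℂ) * ((n+k).choose k:ℂ)) *
          ((-1:ℂ)^k * (Complex.Gamma μ * (Nat.factorial k) / Complex.Gamma (μ + k + 1))) := by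
        apply Finset.sum_congr rfl
        intro k _
        rw [intervalIntegral.integral_const_mul, hbk k, hbeta k]
    _ = (Complex.Gamma μ / Complex.Gamma (μ + n + 1)) *
        ∑ k ∈ range (n+1), ((-1:ℂ)^k * (n.choose k) * ((n+k).choose k) * (Nat.factorial k)) *
          ∏ j ∈ Ico (k+1) (n+1), (μ + (j:ℂ)) := by
        rw [Finset.mul_sum]
        apply Finset.sum_congr rfl
        intro k hk
        rw [Finset.mem_range] at hk
        have hgr := gamma_ratio μ hμ n k (by omega)
        have h2 : Complex.Gamma μ * (Nat.factorial k) / Complex.Gamma (μ + k + 1)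
            = Complex.Gamma μ * (Nat.factorial k) * (∏ j ∈ Ico (k+1) (n+1), (μ + j))
              / Complex.Gamma (μ + n + 1) := by
          rw [hgr]
          rw [div_eq_div_iff (hΓk k) (by rw [← hgr]; exact hΓk n)]
          ring
        rw [h2]
        field_simp
    _ = Complex.Gamma μ ^ 2 / (Complex.Gamma (μ + n + 1) * Complex.Gamma (μ - n)) := by
        rw [polyid n μ]
        have hig := inv_gamma_sub μ hμ n
        have : (∏ j ∈ Ico 1 (n+1), (μ - (j:ℂ))) = Complex.Gamma μ * (Complex.Gamma (μ - n))⁻¹ := by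
          rw [hig]
          field_simp
        rw [this]
        rw [div_eq_mul_inv, div_eq_mul_inv, mul_inv]
        ring
end

section
/- For every complex ν (indeterminate forms interpreted as limits), √π / ( Γ((1−ν)/2) Γ((ν+2)/2) ) = Σ_{m≥0} C(2m,m) (−1)^m / 4^m · [ sin(π(2m−ν))/(π(2m−ν)) + sin(π(2m+ν+1))/(π(2m+ν+1)) ]. -/
open Complex Real

/-- sin(π z)/(π z), with the value 1 at z = 0. -/
noncomputable def csinc (z : ℂ) : ℂ :=
  if z = 0 then 1 else Complex.sin (π * z) / (π * z)

open MeasureTheory intervalIntegral Set Filter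


/-- ratio recurrence for central binomial / 4^m -/
lemma centralBinom_ratio (n : ℕ) :
    (Nat.centralBinom (n+1) : ℝ) / 4 ^ (n+1) =
      ((Nat.centralBinom n : ℝ) / 4 ^ n) * ((2*n+1) / (2*n+2)) := by
  have h' : ((n:ℝ) + 1) * (Nat.centralBinom (n+1) : ℝ) = 2 * (2*n+1) * Nat.centralBinom n := by
    exact_mod_cast congrArg (Nat.cast : ℕ → ℝ) (Nat.succ_mul_centralBinom_succ n)
  have hn : ((n:ℝ) + 1) ≠ 0 := by positivity
  rw [pow_succ]
  rw [div_mul_div_comm, div_eq_div_iff (by positivity) (by positivity)]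
  linear_combination (2*(4:ℝ)^n) * h'

lemma wallis_prod_eq (n : ℕ) :
    ∏ i ∈ Finset.range n, ((2*(i:ℝ)+1) / (2*i+2)) = (Nat.centralBinom n : ℝ) / 4 ^ n := by
  induction n with
  | zero => simp [Nat.centralBinom]
  | succ n ih => rw [Finset.prod_range_succ, ih, centralBinom_ratio]

lemma centralBinom_div_sq_le (n : ℕ) :
    ((Nat.centralBinom n : ℝ) / 4 ^ n) ^ 2 ≤ 1 / (2*n+1) := by
  induction n with
  | zero => simp [Nat.centralBinom]
  | succ n ih =>
      rw [centralBinom_ratio]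
      push_cast
      have h3 : (0:ℝ) < 2*n+3 := by positivity
      have key : ((2*(n:ℝ)+1)/(2*n+2))^2 * (1/(2*n+1)) ≤ 1/(2*((n:ℝ)+1)+1) := by
        rw [show ((2*(n:ℝ)+1)/(2*n+2))^2 * (1/(2*n+1)) = (2*n+1)/(2*n+2)^2 by
          field_simp]
        rw [show (2*((n:ℝ)+1)+1) = 2*(n:ℝ)+3 by ring]
        rw [div_le_div_iff₀ (by positivity) h3]
        nlinarith [Nat.cast_nonneg (α := ℝ) n]
      calc ((Nat.centralBinom n : ℝ) / 4 ^ n * ((2*n+1)/(2*n+2))) ^ 2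
          = ((Nat.centralBinom n : ℝ) / 4 ^ n)^2 * ((2*(n:ℝ)+1)/(2*n+2))^2 := by ring
        _ ≤ (1/(2*n+1)) * ((2*(n:ℝ)+1)/(2*n+2))^2 := by
            apply mul_le_mul_of_nonneg_right ih (by positivity)
        _ = ((2*(n:ℝ)+1)/(2*n+2))^2 * (1/(2*n+1)) := by ring
        _ ≤ 1/(2*((n:ℝ)+1)+1) := key

lemma centralBinom_div_le_one (n : ℕ) : (Nat.centralBinom n : ℝ) / 4 ^ n ≤ 1 := by
  have h := centralBinom_div_sq_le n
  have h1 : ((Nat.centralBinom n : ℝ) / 4 ^ n) ^ 2 ≤ 1 := by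
    refine h.trans ?_
    rw [div_le_one (by positivity)]
    nlinarith [Nat.cast_nonneg (α := ℝ) n]
  nlinarith [sq_nonneg ((Nat.centralBinom n : ℝ) / 4 ^ n - 1),
    sq_nonneg ((Nat.centralBinom n : ℝ) / 4 ^ n + 1)]


lemma denom_pos {q : ℝ} (hq : 0 ≤ q) (x : ℝ) : 0 < 1 + q * Real.sin x ^ 2 := by
  nlinarith [sq_nonneg (Real.sin x)]

lemma cont_integrand {q : ℝ} (hq : 0 ≤ q) :
    Continuous (fun x : ℝ => (1 + q * Real.sin x ^ 2)⁻¹) := by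
  apply Continuous.inv₀
  · continuity
  · intro x; exact ne_of_gt (denom_pos hq x)

lemma integral_inv_one_add_mul_sin_sq_half {q : ℝ} (hq : 0 ≤ q) :
    ∫ x in (0:ℝ)..(π/2), (1 + q * Real.sin x ^ 2)⁻¹ = π / (2 * Real.sqrt (1+q)) := by
  set a := Real.sqrt (1+q) with ha_def
  have ha : 0 < a := Real.sqrt_pos.mpr (by linarith)
  have ha2 : a ^ 2 = 1 + q := Real.sq_sqrt (by linarith)
  set f := fun x : ℝ => (1 + q * Real.sin x ^ 2)⁻¹ with hf_def
  have hfc : Continuous f := cont_integrand hq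
  -- FTC on [0, b] for b < π/2
  have key : ∀ b ∈ Ico (0:ℝ) (π/2), ∫ x in (0:ℝ)..b, f x = Real.arctan (a * Real.tan b) / a := by
    intro b hb
    have hd : ∀ x ∈ uIcc (0:ℝ) b, HasDerivAt (fun y => Real.arctan (a * Real.tan y) / a) (f x) x := by
      intro x hx
      rw [uIcc_of_le hb.1] at hx
      have hcos : Real.cos x ≠ 0 := by
        have h1 : x < π/2 := lt_of_le_of_lt hx.2 hb.2
        have h2 : -(π/2) < x := by linarith [hx.1, Real.pi_pos]
        exact ne_of_gt (Real.cos_pos_of_mem_Ioo ⟨h2, h1⟩)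
      have h1 : HasDerivAt (fun y => a * Real.tan y) (a * (1 / Real.cos x ^ 2)) x :=
        (Real.hasDerivAt_tan hcos).const_mul a
      have h2 : HasDerivAt Real.arctan (1 / (1 + (a * Real.tan x) ^ 2)) (a * Real.tan x) :=
        Real.hasDerivAt_arctan _
      have h3 := (h2.comp x h1).div_const a
      refine h3.congr_deriv ?_
      symm
      have hcos2 : (0:ℝ) < Real.cos x ^ 2 := by positivity
      rw [hf_def]
      field_simp [Real.tan_eq_sin_div_cos]
      linear_combination (Real.tan x^2*Real.cos x^2)*ha2 + (1+q)*(Real.tan x*Real.cos x + Real.sin x)*(Real.tan_mul_cos hcos) + (Real.sin_sq_add_cos_sq x)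
    exact integral_eq_sub_of_hasDerivAt hd ((hfc.intervalIntegrable _ _)) |>.trans (by simp)
  -- limit as b → π/2
  have hint : ∀ a b : ℝ, IntervalIntegrable f volume a b := fun a b => hfc.intervalIntegrable a b
  have hcontprim : Continuous (fun b => ∫ x in (0:ℝ)..b, f x) :=
    intervalIntegral.continuous_primitive hint 0
  have hlim1 : Tendsto (fun b => ∫ x in (0:ℝ)..b, f x) (nhdsWithin (π/2) (Iio (π/2)))
      (nhds (∫ x in (0:ℝ)..(π/2), f x)) :=
    (hcontprim.tendsto _).mono_left nhdsWithin_le_nhds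
  have hlim2 : Tendsto (fun b => Real.arctan (a * Real.tan b) / a) (nhdsWithin (π/2) (Iio (π/2)))
      (nhds (π / (2*a))) := by
    have h1 : Tendsto (fun b => a * Real.tan b) (nhdsWithin (π/2) (Iio (π/2))) atTop :=
      (Real.tendsto_tan_pi_div_two).const_mul_atTop ha
    have h2 : Tendsto (fun b => Real.arctan (a * Real.tan b)) (nhdsWithin (π/2) (Iio (π/2)))
        (nhds (π/2)) := (Real.tendsto_arctan_atTop.mono_right nhdsWithin_le_nhds).comp h1
    have := h2.div_const a
    simpa [div_div] using this
  have heq : (fun b => ∫ x in (0:ℝ)..b, f x) =ᶠ[nhdsWithin (π/2) (Iio (π/2))]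
      (fun b => Real.arctan (a * Real.tan b) / a) := by
    filter_upwards [Ioo_mem_nhdsLT_of_mem (by constructor <;> [linarith [Real.pi_pos]; rfl] :
      (π/2) ∈ Ioc (0:ℝ) (π/2))] with b hb
    exact key b ⟨le_of_lt hb.1, hb.2⟩
  have := tendsto_nhds_unique (hlim1.congr' heq) hlim2
  simpa [mul_comm] using this

lemma integral_inv_one_add_mul_sin_sq {q : ℝ} (hq : 0 ≤ q) :
    ∫ x in (0:ℝ)..π, (1 + q * Real.sin x ^ 2)⁻¹ = π / Real.sqrt (1+q) := by
  set f := fun x : ℝ => (1 + q * Real.sin x ^ 2)⁻¹ with hf_def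
  have hfc : Continuous f := cont_integrand hq
  have hsplit : ∫ x in (0:ℝ)..π, f x =
      (∫ x in (0:ℝ)..(π/2), f x) + ∫ x in (π/2)..π, f x :=
    (integral_add_adjacent_intervals (hfc.intervalIntegrable _ _) (hfc.intervalIntegrable _ _)).symm
  have hrefl : ∫ x in (π/2)..π, f x = ∫ x in (0:ℝ)..(π/2), f x := by
    have := intervalIntegral.integral_comp_sub_left (a := 0) (b := π/2) f π
    simp only [sub_zero, sub_self] at this
    rw [sub_half] at this
    rw [← this]
    congr 1
    ext x
    simp [hf_def, Real.sin_pi_sub]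
  rw [hsplit, hrefl, integral_inv_one_add_mul_sin_sq_half hq]
  have ha : 0 < Real.sqrt (1+q) := Real.sqrt_pos.mpr (by linarith)
  field_simp
  ring


lemma term_abs_le {q : ℝ} (h0 : 0 ≤ q) (m : ℕ) (x : ℝ) : |(-q * Real.sin x ^ 2)^m| ≤ q^m := by
  rw [_root_.abs_pow]
  apply pow_le_pow_left₀ (abs_nonneg _)
  rw [_root_.abs_mul, _root_.abs_neg, _root_.abs_of_nonneg h0, _root_.abs_of_nonneg (sq_nonneg _)]
  nlinarith [Real.sin_sq_le_one x, sq_nonneg (Real.sin x)]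

lemma term_integral_eq {q : ℝ} (m : ℕ) :
    ∫ x in Ioc (0:ℝ) π, (-q * Real.sin x ^ 2)^m =
      π * ((Nat.centralBinom m : ℝ) / 4 ^ m * (-q)^m) := by
  rw [← intervalIntegral.integral_of_le Real.pi_pos.le]
  have : ∀ x : ℝ, (-q * Real.sin x ^ 2)^m = (-q)^m * Real.sin x ^ (2*m) := by
    intro x; rw [mul_pow, pow_mul]
  simp_rw [this]
  rw [intervalIntegral.integral_const_mul, integral_sin_pow_even, wallis_prod_eq]
  ring

lemma summable_term {q : ℝ} (h0 : 0 ≤ q) (h1 : q < 1) :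
    Summable (fun m : ℕ => (Nat.centralBinom m : ℝ)/4^m * (-q)^m) := by
  apply Summable.of_norm_bounded (g := fun m => q^m) (summable_geometric_of_lt_one h0 h1)
  intro m
  rw [Real.norm_eq_abs, _root_.abs_mul, _root_.abs_pow, _root_.abs_neg, _root_.abs_of_nonneg h0]
  calc |(Nat.centralBinom m : ℝ)/4^m| * q^m ≤ 1 * q^m := by
        apply mul_le_mul_of_nonneg_right _ (by positivity)
        rw [_root_.abs_of_nonneg (by positivity)]
        exact centralBinom_div_le_one m
    _ = q^m := one_mul _

lemma hasSum_centralBinom_inv_sqrt {q : ℝ} (h0 : 0 ≤ q) (h1 : q < 1) :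
    HasSum (fun m : ℕ => (Nat.centralBinom m : ℝ)/4^m * (-q)^m) ((Real.sqrt (1+q))⁻¹) := by
  refine (Summable.hasSum_iff (summable_term h0 h1)).mpr ?_
  have interchange : ∫ x in Ioc (0:ℝ) π, (∑' m : ℕ, (-q * Real.sin x ^ 2)^m) =
      ∑' m : ℕ, ∫ x in Ioc (0:ℝ) π, (-q * Real.sin x ^ 2)^m := by
    apply MeasureTheory.integral_tsum
    · intro m
      exact (Continuous.aestronglyMeasurable (by continuity))
    · apply ne_top_of_le_ne_top (b := ∑' m : ℕ, ENNReal.ofReal (q^m * π))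
      · rw [← ENNReal.ofReal_tsum_of_nonneg (fun m => by positivity)
          (by simpa using (summable_geometric_of_lt_one h0 h1).mul_right π)]
        exact ENNReal.ofReal_ne_top
      · apply ENNReal.tsum_le_tsum
        intro m
        calc ∫⁻ x in Ioc (0:ℝ) π, ‖(-q * Real.sin x ^ 2)^m‖₊ ∂volume
            ≤ ∫⁻ _ in Ioc (0:ℝ) π, ENNReal.ofReal (q^m) ∂volume := by
              apply lintegral_mono
              intro x
              dsimp only
              rw [← enorm_eq_nnnorm, ← ofReal_norm, Real.norm_eq_abs]
              exact ENNReal.ofReal_le_ofReal (term_abs_le h0 m x)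
          _ = ENNReal.ofReal (q^m) * volume (Ioc (0:ℝ) π) := by
              rw [MeasureTheory.setLIntegral_const]
          _ = ENNReal.ofReal (q^m * π) := by
              rw [Real.volume_Ioc, sub_zero, ← ENNReal.ofReal_mul (by positivity)]
  have pointwise : ∀ x : ℝ, (∑' m : ℕ, (-q * Real.sin x ^ 2)^m) = (1 + q * Real.sin x ^ 2)⁻¹ := by
    intro x
    rw [tsum_geometric_of_norm_lt_one]
    · congr 1; ring
    · rw [Real.norm_eq_abs, _root_.abs_mul, _root_.abs_neg, _root_.abs_of_nonneg h0, _root_.abs_of_nonneg (sq_nonneg _)]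
      nlinarith [Real.sin_sq_le_one x, sq_nonneg (Real.sin x)]
  have lhs_eq : ∑' m : ℕ, (Nat.centralBinom m : ℝ)/4^m * (-q)^m =
      (1/π) * ∑' m : ℕ, ∫ x in Ioc (0:ℝ) π, (-q * Real.sin x ^ 2)^m := by
    rw [← tsum_mul_left]
    congr 1; ext m
    rw [term_integral_eq]
    field_simp
  rw [lhs_eq, ← interchange]
  simp_rw [pointwise]
  rw [← intervalIntegral.integral_of_le Real.pi_pos.le, integral_inv_one_add_mul_sin_sq h0]
  have ha : 0 < Real.sqrt (1+q) := Real.sqrt_pos.mpr (by linarith)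
  field_simp



lemma csinc_of_ne {z : ℂ} (hz : z ≠ 0) : csinc z = Complex.sin (π * z) / (π * z) := if_neg hz

lemma csinc_eq_dslope : csinc = dslope (fun w => Complex.sin (π * w) / π) 0 := by
  have hd : HasDerivAt (fun w : ℂ => Complex.sin (π * w) / π) 1 0 := by
    have h1 : HasDerivAt (fun w : ℂ => π * w) ((π:ℂ)) 0 := by
      simpa using (hasDerivAt_id (0:ℂ)).const_mul (π:ℂ)
    have h2 := (Complex.hasDerivAt_sin ((π:ℂ) * 0)).comp 0 h1
    have h3 := h2.div_const (π:ℂ)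
    have hπ : (π:ℂ) ≠ 0 := Complex.ofReal_ne_zero.mpr Real.pi_ne_zero
    simpa [mul_comm, hπ] using h3
  funext z
  by_cases hz : z = 0
  · subst hz
    rw [dslope_same]
    simp [csinc, hd.deriv]
  · rw [dslope_of_ne _ hz, slope_def_field, csinc_of_ne hz]
    simp only [mul_zero, Complex.sin_zero, zero_div, sub_zero]
    rw [div_div]

lemma differentiable_csinc : Differentiable ℂ csinc := by
  rw [← differentiableOn_univ, csinc_eq_dslope]
  rw [Complex.differentiableOn_dslope (univ_mem)]
  apply Differentiable.differentiableOn
  exact (Complex.differentiable_sin.comp ((differentiable_const _).mul differentiable_id)).div_const _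

lemma norm_sin_le (w : ℂ) : ‖Complex.sin w‖ ≤ Real.exp |w.im| := by
  rw [Complex.sin]
  rw [show (Complex.exp (-w * Complex.I) - Complex.exp (w * Complex.I)) * Complex.I / 2
      = (Complex.exp (-w * Complex.I) - Complex.exp (w * Complex.I)) * (Complex.I / 2) by ring]
  rw [norm_mul]
  have h2 : ‖Complex.I / 2‖ = 1/2 := by simp
  rw [h2]
  have h3 : ‖Complex.exp (-w * Complex.I) - Complex.exp (w * Complex.I)‖ ≤
      Real.exp |w.im| + Real.exp |w.im| := by
    refine (norm_sub_le _ _).trans (add_le_add ?_ ?_) <;>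
    · rw [Complex.norm_exp]
      apply Real.exp_le_exp.mpr
      simp only [neg_mul, Complex.neg_re, Complex.mul_re, Complex.I_re, Complex.I_im]
      ring_nf
      first
        | nlinarith [le_abs_self w.im, neg_abs_le w.im]
        | nlinarith [le_abs_self w.im, neg_abs_le w.im]
  nlinarith [Real.exp_pos |w.im|]

lemma csinc_norm_le {z : ℂ} (hz : z ≠ 0) :
    ‖csinc z‖ ≤ Real.exp (π * |z.im|) / (π * ‖z‖) := by
  rw [csinc_of_ne hz, norm_div]
  have hzpos : 0 < ‖z‖ := norm_pos_iff.mpr hz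
  apply div_le_div₀ (by positivity) _ (by positivity) _
  · refine (norm_sin_le _).trans ?_
    apply Real.exp_le_exp.mpr
    simp only [Complex.mul_im, Complex.ofReal_re, Complex.ofReal_im]
    rw [abs_le]
    constructor
    · simp only [zero_mul, add_zero]
      nlinarith [le_abs_self z.im, neg_abs_le z.im, Real.pi_pos, abs_nonneg z.im]
    · simp only [zero_mul, add_zero]
      nlinarith [le_abs_self z.im, neg_abs_le z.im, Real.pi_pos, abs_nonneg z.im]
  · rw [norm_mul]
    simp [_root_.abs_of_nonneg Real.pi_nonneg]


-- continuity / measurability of t ↦ (t:ℂ)^w on positive reals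
lemma contOn_cpow (w : ℂ) : ContinuousOn (fun s : ℝ => (s:ℂ)^w) (Ioi 0) := fun x hx =>
  (Complex.continuousAt_ofReal_cpow_const x w (Or.inr (ne_of_gt hx))).continuousWithinAt

lemma aesm_cpow (w : ℂ) {s : Set ℝ} (hs : MeasurableSet s) (hsub : s ⊆ Ioi 0) :
    AEStronglyMeasurable (fun t : ℝ => (t:ℂ)^w) (volume.restrict s) :=
  ((contOn_cpow w).mono hsub).aestronglyMeasurable hs

lemma norm_cpow_of_pos {t : ℝ} (ht : 0 < t) (w : ℂ) : ‖(t:ℂ)^w‖ = t ^ w.re := by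
  rw [Complex.norm_cpow_eq_rpow_re_of_pos ht]

/-- integrability of rpow on `Ioo 0 1` -/
lemma integrableOn_rpow_Ioo {p : ℝ} (hp : -1 < p) :
    IntegrableOn (fun t : ℝ => t ^ p) (Ioo (0:ℝ) 1) := by
  have h := (intervalIntegrable_rpow' (a := 0) (b := 1) hp)
  rw [intervalIntegrable_iff_integrableOn_Ioo_of_le zero_le_one] at h
  exact h

lemma real_integral_Ioo_rpow {p : ℝ} (hp : -1 < p) :
    ∫ t in Ioo (0:ℝ) 1, t ^ p = 1/(p+1) := by
  rw [← integral_Ioc_eq_integral_Ioo, ← intervalIntegral.integral_of_le zero_le_one]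
  rw [integral_rpow (Or.inl hp)]
  rw [Real.one_rpow, Real.zero_rpow (by linarith)]
  norm_num

/-- integrability of cpow on `Ioo 0 1` -/
lemma integrableOn_cpow_Ioo {w : ℂ} (hw : -1 < w.re) :
    IntegrableOn (fun t : ℝ => (t:ℂ)^w) (Ioo (0:ℝ) 1) := by
  apply Integrable.mono' (integrableOn_rpow_Ioo hw)
    (aesm_cpow w measurableSet_Ioo (fun x hx => hx.1))
  filter_upwards [ae_restrict_mem measurableSet_Ioo] with t ht
  rw [norm_cpow_of_pos ht.1]

lemma integral_cpow_Ioo {w : ℂ} (hw : 0 < w.re) :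
    ∫ t in Ioo (0:ℝ) 1, (t:ℂ)^(w-1) = 1/w := by
  have hb := Complex.betaIntegral_eval_one_right hw
  rw [Complex.betaIntegral] at hb
  simp only [sub_self, Complex.cpow_zero, mul_one] at hb
  rw [← hb, intervalIntegral.integral_of_le zero_le_one, integral_Ioc_eq_integral_Ioo]

lemma norm_integral_cpow_Ioo {w : ℂ} (hw : -1 < w.re) :
    ∫ t in Ioo (0:ℝ) 1, ‖(t:ℂ)^w‖ = 1/(w.re+1) := by
  rw [← real_integral_Ioo_rpow hw]
  apply setIntegral_congr_fun measurableSet_Ioo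
  intro t ht
  exact norm_cpow_of_pos ht.1 w


noncomputable def coef (m : ℕ) : ℂ := ((2 * m).choose m : ℂ) * (-1) ^ m / 4 ^ m

noncomputable def Fterm (m : ℕ) (ν : ℂ) : ℂ :=
  coef m * (csinc (2 * (m : ℂ) - ν) + csinc (2 * (m : ℂ) + ν + 1))

lemma coef_norm (m : ℕ) : ‖coef m‖ = (Nat.centralBinom m : ℝ) / 4 ^ m := by
  rw [coef, Nat.centralBinom]
  rw [norm_div, norm_mul, norm_pow, norm_pow]
  simp [Complex.norm_natCast]

lemma coef_norm_le (m : ℕ) : ‖coef m‖ ≤ (Real.sqrt ((m:ℝ)+1))⁻¹ := by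
  rw [coef_norm]
  have h1 := centralBinom_div_sq_le m
  have h0 : (0:ℝ) ≤ (Nat.centralBinom m : ℝ) / 4 ^ m := by positivity
  have h2 : ((Nat.centralBinom m : ℝ) / 4 ^ m) ^ 2 ≤ 1 / ((m:ℝ)+1) := by
    refine h1.trans ?_
    apply div_le_div_of_nonneg_left (by norm_num) (by positivity) (by linarith [Nat.cast_nonneg (α := ℝ) m])
  calc (Nat.centralBinom m : ℝ) / 4 ^ m = Real.sqrt (((Nat.centralBinom m : ℝ) / 4 ^ m)^2) := by
        rw [Real.sqrt_sq h0]
    _ ≤ Real.sqrt (1/((m:ℝ)+1)) := Real.sqrt_le_sqrt h2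
    _ = (Real.sqrt ((m:ℝ)+1))⁻¹ := by
        rw [one_div, Real.sqrt_inv]

lemma differentiable_Fterm (m : ℕ) : Differentiable ℂ (Fterm m) := by
  apply Differentiable.const_mul
  exact ((differentiable_csinc.comp ((differentiable_const _).sub differentiable_id)).add
    (differentiable_csinc.comp (((differentiable_const _).add differentiable_id).add
      (differentiable_const _))))

lemma summable_u (C : ℝ) : Summable (fun m : ℕ => (Real.sqrt ((m:ℝ)+1))⁻¹ * (C/((m:ℝ)+1))) := by
  have h1 : Summable (fun n : ℕ => 1/((n:ℝ)+1) ^ (3/2 : ℝ)) := by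
    have := (Real.summable_one_div_nat_rpow (p := 3/2)).mpr (by norm_num)
    exact_mod_cast (summable_nat_add_iff 1).mpr this
  apply Summable.of_norm_bounded (g := fun m : ℕ => |C| * (1/((m:ℝ)+1) ^ (3/2 : ℝ))) (h1.mul_left _)
  intro m
  have hm : (0:ℝ) < (m:ℝ)+1 := by positivity
  rw [Real.norm_eq_abs, _root_.abs_mul, abs_inv]
  rw [_root_.abs_of_nonneg (Real.sqrt_nonneg _), _root_.abs_div]
  rw [_root_.abs_of_nonneg hm.le]
  have key : ((m:ℝ)+1) ^ (3/2 : ℝ) = Real.sqrt ((m:ℝ)+1) * ((m:ℝ)+1) := by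
    rw [show (3/2:ℝ) = 1/2 + 1 by norm_num, Real.rpow_add hm, Real.rpow_one,
      Real.sqrt_eq_rpow]
  rw [key]
  apply le_of_eq
  have hs : Real.sqrt ((m:ℝ)+1) ≠ 0 := by positivity
  field_simp

lemma Fterm_bound {R : ℝ} (hR : 0 < R) {m : ℕ} (hm : R + 1 ≤ (m:ℝ)) {ν : ℂ}
    (hν : ν ∈ Metric.ball (0:ℂ) R) :
    ‖Fterm m ν‖ ≤ (Real.sqrt ((m:ℝ)+1))⁻¹ * (2 * Real.exp (π*R) / π /((m:ℝ)+1)) := by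
  have hνR : ‖ν‖ < R := by simpa using hν
  have him : |ν.im| ≤ R := le_of_lt (lt_of_le_of_lt (Complex.abs_im_le_norm ν) hνR)
  have hm1 : (1:ℝ) ≤ m := by linarith
  have e1 : ‖(2*(m:ℂ))‖ = 2*(m:ℝ) := by
    rw [norm_mul]; simp
  have e2 : ‖(2*(m:ℂ)+1)‖ = 2*(m:ℝ)+1 := by
    have : (2*(m:ℂ)+1) = ((2*(m:ℝ)+1 : ℝ) : ℂ) := by push_cast; ring
    rw [this, Complex.norm_real, Real.norm_eq_abs, _root_.abs_of_nonneg (by positivity)]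
  have h1n : (m:ℝ) + 1 ≤ ‖2 * (m:ℂ) - ν‖ := by
    have := norm_sub_norm_le (2*(m:ℂ)) ν
    rw [e1] at this
    linarith
  have h2n : (m:ℝ) + 1 ≤ ‖2 * (m:ℂ) + ν + 1‖ := by
    have h := norm_sub_norm_le (2*(m:ℂ)+1) (-ν)
    rw [e2, sub_neg_eq_add, norm_neg] at h
    have heq : 2*(m:ℂ)+1+ν = 2*(m:ℂ)+ν+1 := by ring
    rw [heq] at h
    linarith
  have hz1 : (2 * (m:ℂ) - ν) ≠ 0 := by
    intro h; rw [h] at h1n; simp at h1n; linarith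
  have hz2 : (2 * (m:ℂ) + ν + 1) ≠ 0 := by
    intro h; rw [h] at h2n; simp at h2n; linarith
  have him1 : |(2 * (m:ℂ) - ν).im| ≤ R := by
    simp only [Complex.sub_im, Complex.mul_im, Complex.natCast_im]
    norm_num
    simpa using him
  have him2 : |(2 * (m:ℂ) + ν + 1).im| ≤ R := by
    simp only [Complex.add_im, Complex.mul_im, Complex.natCast_im, Complex.one_im]
    norm_num
    simpa using him
  have hcb1 : ‖csinc (2 * (m:ℂ) - ν)‖ ≤ Real.exp (π*R) / (π * ((m:ℝ)+1)) := by
    refine (csinc_norm_le hz1).trans ?_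
    apply div_le_div₀ (by positivity)
      (Real.exp_le_exp.mpr (by nlinarith [Real.pi_pos])) (by positivity)
      (by nlinarith [Real.pi_pos])
  have hcb2 : ‖csinc (2 * (m:ℂ) + ν + 1)‖ ≤ Real.exp (π*R) / (π * ((m:ℝ)+1)) := by
    refine (csinc_norm_le hz2).trans ?_
    apply div_le_div₀ (by positivity)
      (Real.exp_le_exp.mpr (by nlinarith [Real.pi_pos])) (by positivity)
      (by nlinarith [Real.pi_pos])
  calc ‖Fterm m ν‖ = ‖coef m‖ * ‖csinc (2 * (m:ℂ) - ν) + csinc (2 * (m:ℂ) + ν + 1)‖ := by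
        rw [Fterm, norm_mul]
    _ ≤ (Real.sqrt ((m:ℝ)+1))⁻¹ * (Real.exp (π*R) / (π * ((m:ℝ)+1)) + Real.exp (π*R) / (π * ((m:ℝ)+1))) := by
        apply mul_le_mul (coef_norm_le m) ((norm_add_le _ _).trans (add_le_add hcb1 hcb2))
          (norm_nonneg _) (by positivity)
    _ = (Real.sqrt ((m:ℝ)+1))⁻¹ * (2 * Real.exp (π*R) / π /((m:ℝ)+1)) := by
        rw [div_div]
        ring

lemma differentiable_RHS : Differentiable ℂ (fun ν : ℂ => ∑' m : ℕ, Fterm m ν) := by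
  intro ν₀
  set R := ‖ν₀‖ + 1 with hR_def
  have hR : 0 < R := by positivity
  have hball : ν₀ ∈ Metric.ball (0:ℂ) R := by
    simp [hR_def]
  suffices h : DifferentiableOn ℂ (fun ν : ℂ => ∑' m : ℕ, Fterm m ν) (Metric.ball (0:ℂ) R) by
    exact h.differentiableAt (Metric.isOpen_ball.mem_nhds hball)
  have hbnd : ∀ᶠ (n : ℕ) in Filter.cofinite, ∀ x ∈ Metric.ball (0:ℂ) R,
      ‖Fterm n x‖ ≤ (Real.sqrt ((n:ℝ)+1))⁻¹ * ((2 * Real.exp (π*R) / π)/((n:ℝ)+1)) := by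
    rw [Nat.cofinite_eq_atTop]
    filter_upwards [Filter.eventually_ge_atTop (⌈R+1⌉₊)] with m hm ν hν
    have h1 : R + 1 ≤ (m:ℝ) := le_trans (Nat.le_ceil _) (by exact_mod_cast hm)
    have := Fterm_bound hR h1 hν
    convert this using 2
  have tu := tendstoUniformlyOn_tsum_of_cofinite_eventually
    (summable_u (2 * Real.exp (π*R) / π)) hbnd
  refine tu.tendstoLocallyUniformlyOn.differentiableOn ?_ Metric.isOpen_ball
  filter_upwards with t
  exact (Differentiable.fun_sum (fun m _ => differentiable_Fterm m)).differentiableOn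


-- axioms from previous sections
section family
variable {w : ℂ}

lemma re_den (m : ℕ) : (2*(m:ℂ) + w + 1).re = 2*(m:ℝ) + w.re + 1 := by
  have h : (2*(m:ℂ) + w + 1) = (((2*(m:ℝ)+1 : ℝ)):ℂ) + w := by push_cast; ring
  rw [h, Complex.add_re, Complex.ofReal_re]
  ring

lemma re_exp (m : ℕ) : (2*(m:ℂ) + w).re = 2*(m:ℝ) + w.re := by
  have h : (2*(m:ℂ) + w) = (((2*(m:ℝ) : ℝ)):ℂ) + w := by push_cast; ring
  rw [h, Complex.add_re, Complex.ofReal_re]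

lemma den_pos (hw : -1 < w.re) (m : ℕ) : 0 < 2*(m:ℝ) + w.re + 1 := by
  have := Nat.cast_nonneg (α := ℝ) m
  linarith

lemma exp_re_pos (hw : -1 < w.re) (m : ℕ) : 0 < (2*(m:ℂ) + w + 1).re := by
  rw [re_den]
  exact den_pos hw m

lemma norm_den_ge (hw : -1 < w.re) {m : ℕ} (hm : 1 ≤ m) (hw2 : w.re ≤ 1) :
    (m:ℝ) + 1 ≤ ‖2*(m:ℂ) + w + 1‖ := by
  have h1 : (2*(m:ℂ) + w + 1).re ≤ ‖2*(m:ℂ) + w + 1‖ := Complex.re_le_norm _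
  have h2 : (2*(m:ℂ) + w + 1).re = 2*(m:ℝ) + w.re + 1 := re_den m
  have hm' : (1:ℝ) ≤ (m:ℝ) := by exact_mod_cast hm
  rw [h2] at h1
  linarith

lemma family_summable (hw1 : -1 < w.re) (hw2 : w.re ≤ 1) :
    Summable (fun m : ℕ => coef m * (1/(2*(m:ℂ) + w + 1))) := by
  apply Summable.of_norm_bounded_eventually (g := fun m : ℕ => (Real.sqrt ((m:ℝ)+1))⁻¹ * (1/((m:ℝ)+1)))
    (summable_u 1)
  rw [Nat.cofinite_eq_atTop]
  filter_upwards [Filter.eventually_ge_atTop 1] with m hm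
  rw [norm_mul, norm_div, norm_one]
  have hden := norm_den_ge hw1 hm hw2
  have hmp : (0:ℝ) < (m:ℝ)+1 := by positivity
  apply mul_le_mul (coef_norm_le m) _ (by positivity) (by positivity)
  rw [div_le_div_iff₀ (lt_of_lt_of_le hmp hden) hmp]
  nlinarith [hden]

lemma family_norm_integral (hw1 : -1 < w.re) (m : ℕ) :
    ∫ t in Ioo (0:ℝ) 1, ‖coef m * (t:ℂ)^(2*(m:ℂ) + w)‖ =
      ‖coef m‖ * (1/(2*(m:ℝ) + w.re + 1)) := by
  simp_rw [norm_mul]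
  rw [MeasureTheory.integral_const_mul]
  congr 1
  have hre : -1 < (2*(m:ℂ) + w).re := by
    rw [re_exp]
    have := den_pos hw1 m
    linarith
  rw [norm_integral_cpow_Ioo hre, re_exp]

lemma family_integral (hw1 : -1 < w.re) (m : ℕ) :
    ∫ t in Ioo (0:ℝ) 1, coef m * (t:ℂ)^(2*(m:ℂ) + w) = coef m * (1/(2*(m:ℂ) + w + 1)) := by
  rw [MeasureTheory.integral_const_mul]
  congr 1
  have h := integral_cpow_Ioo (w := 2*(m:ℂ) + w + 1) (exp_re_pos hw1 m)
  simpa using h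

lemma family_integrable (hw1 : -1 < w.re) (m : ℕ) :
    IntegrableOn (fun t : ℝ => coef m * (t:ℂ)^(2*(m:ℂ) + w)) (Ioo (0:ℝ) 1) := by
  apply Integrable.const_mul
  apply integrableOn_cpow_Ioo
  rw [re_exp]
  have := den_pos hw1 m
  linarith

lemma family_pointwise (hw1 : -1 < w.re) {t : ℝ} (ht : t ∈ Ioo (0:ℝ) 1) :
    HasSum (fun m : ℕ => coef m * (t:ℂ)^(2*(m:ℂ) + w))
      ((t:ℂ)^w * ((Real.sqrt (1+t^2))⁻¹ : ℝ)) := by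
  obtain ⟨ht0, ht1⟩ := ht
  have hq0 : (0:ℝ) ≤ t^2 := sq_nonneg t
  have hq1 : t^2 < 1 := by nlinarith
  have h := hasSum_centralBinom_inv_sqrt hq0 hq1
  have h2 : HasSum (fun m : ℕ => (((Nat.centralBinom m : ℝ)/4^m * (-t^2)^m : ℝ) : ℂ))
      (((Real.sqrt (1+t^2))⁻¹ : ℝ) : ℂ) := Complex.hasSum_ofReal.mpr h
  have h3 := h2.mul_left ((t:ℂ)^w)
  convert h3 using 2 with m
  case e'_3 => rfl
  have htne : (t:ℂ) ≠ 0 := Complex.ofReal_ne_zero.mpr (ne_of_gt ht0)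
  rw [show 2*(m:ℂ) + w = w + (2*m : ℕ) by push_cast; ring]
  rw [Complex.cpow_add _ _ htne, Complex.cpow_natCast]
  rw [coef]
  have : ((2 * m).choose m : ℂ) = ((Nat.centralBinom m : ℝ) : ℂ) := by
    rw [Nat.centralBinom]
    push_cast
    ring
  rw [this]
  push_cast
  ring

lemma family_eq (hw1 : -1 < w.re) (hw2 : w.re ≤ 1) :
    ∑' m : ℕ, coef m * (1/(2*(m:ℂ) + w + 1)) =
      ∫ t in Ioo (0:ℝ) 1, (t:ℂ)^w * ((Real.sqrt (1+t^2))⁻¹ : ℝ) := by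
  have interchange : ∫ t in Ioo (0:ℝ) 1, (∑' m : ℕ, coef m * (t:ℂ)^(2*(m:ℂ) + w)) =
      ∑' m : ℕ, ∫ t in Ioo (0:ℝ) 1, coef m * (t:ℂ)^(2*(m:ℂ) + w) := by
    apply MeasureTheory.integral_tsum
    · intro m
      exact (aesm_cpow _ measurableSet_Ioo (fun x hx => hx.1)).const_mul _
    · apply ne_top_of_le_ne_top
        (b := ∑' m : ℕ, ENNReal.ofReal (‖coef m‖ * (1/(2*(m:ℝ) + w.re + 1))))
      · have hpos : ∀ m : ℕ, 0 < 2*(m:ℝ) + w.re + 1 := den_pos hw1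
        rw [← ENNReal.ofReal_tsum_of_nonneg
          (fun m => mul_nonneg (norm_nonneg _) (le_of_lt (div_pos one_pos (hpos m)))) ?_]
        · exact ENNReal.ofReal_ne_top
        · -- summability of the norms
          apply Summable.of_norm_bounded_eventually
            (g := fun m : ℕ => (Real.sqrt ((m:ℝ)+1))⁻¹ * (1/((m:ℝ)+1))) (summable_u 1)
          rw [Nat.cofinite_eq_atTop]
          filter_upwards [Filter.eventually_ge_atTop 1] with m hm
          have hm' : (1:ℝ) ≤ (m:ℝ) := by exact_mod_cast hm
          have hd : (m:ℝ) + 1 ≤ 2*(m:ℝ) + w.re + 1 := by linarith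
          have hmp : (0:ℝ) < (m:ℝ)+1 := by positivity
          rw [Real.norm_eq_abs, _root_.abs_of_nonneg
            (mul_nonneg (norm_nonneg _) (le_of_lt (div_pos one_pos (hpos m))))]
          apply mul_le_mul (coef_norm_le m) _
            (le_of_lt (div_pos one_pos (hpos m))) (by positivity)
          rw [div_le_div_iff₀ (hpos m) hmp]
          nlinarith
      · apply ENNReal.tsum_le_tsum
        intro m
        have heq := family_norm_integral hw1 m
        have hint : Integrable (fun t : ℝ => ‖coef m * (t:ℂ)^(2*(m:ℂ) + w)‖)
            (volume.restrict (Ioo (0:ℝ) 1)) := (family_integrable hw1 m).norm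
        have h0 : 0 ≤ᵐ[volume.restrict (Ioo (0:ℝ) 1)]
            (fun t : ℝ => ‖coef m * (t:ℂ)^(2*(m:ℂ) + w)‖) :=
          Filter.Eventually.of_forall (fun t => norm_nonneg _)
        have hor := MeasureTheory.ofReal_integral_eq_lintegral_ofReal hint h0
        rw [heq] at hor
        apply le_of_eq
        calc ∫⁻ a in Ioo (0:ℝ) 1, (‖coef m * (a:ℂ)^(2*(m:ℂ) + w)‖₊ : ENNReal) ∂volume
            = ∫⁻ a in Ioo (0:ℝ) 1, ENNReal.ofReal ‖coef m * (a:ℂ)^(2*(m:ℂ) + w)‖ ∂volume := by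
              simp_rw [ofReal_norm, enorm_eq_nnnorm]
          _ = ENNReal.ofReal (‖coef m‖ * (1/(2*(m:ℝ) + w.re + 1))) := hor.symm
  calc ∑' m : ℕ, coef m * (1/(2*(m:ℂ) + w + 1))
      = ∑' m : ℕ, ∫ t in Ioo (0:ℝ) 1, coef m * (t:ℂ)^(2*(m:ℂ) + w) := by
        congr 1; ext m; exact (family_integral hw1 m).symm
    _ = ∫ t in Ioo (0:ℝ) 1, (∑' m : ℕ, coef m * (t:ℂ)^(2*(m:ℂ) + w)) := interchange.symm
    _ = ∫ t in Ioo (0:ℝ) 1, (t:ℂ)^w * ((Real.sqrt (1+t^2))⁻¹ : ℝ) := by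
        apply setIntegral_congr_fun measurableSet_Ioo
        intro t ht
        exact (family_pointwise hw1 ht).tsum_eq
end family


variable {ν : ℂ}

noncomputable def gfun (ν : ℂ) (s : ℝ) : ℂ := (s:ℂ)^ν * ((Real.sqrt (1+s^2))⁻¹ : ℝ)

lemma one_le_sqrt_one_add_sq (s : ℝ) : 1 ≤ Real.sqrt (1+s^2) := by
  rw [show (1:ℝ) ≤ Real.sqrt (1+s^2) ↔ True by
    simp only [iff_true]
    apply Real.one_le_sqrt.mpr
    nlinarith [sq_nonneg s]]
  trivial

lemma sqrt_one_add_sq_pos (s : ℝ) : 0 < Real.sqrt (1+s^2) :=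
  lt_of_lt_of_le one_pos (one_le_sqrt_one_add_sq s)

lemma gfun_contOn : ContinuousOn (gfun ν) (Set.Ioi 0) := by
  apply (contOn_cpow ν).mul
  apply Continuous.continuousOn
  apply Complex.continuous_ofReal.comp
  exact (Real.continuous_sqrt.comp (by continuity)).inv₀ (fun x => ne_of_gt (sqrt_one_add_sq_pos x))

lemma gfun_norm {s : ℝ} (hs : 0 < s) : ‖gfun ν s‖ = s ^ ν.re * (Real.sqrt (1+s^2))⁻¹ := by
  rw [gfun, norm_mul, norm_cpow_of_pos hs, Complex.norm_real, Real.norm_eq_abs,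
    _root_.abs_of_nonneg (inv_nonneg.mpr (Real.sqrt_nonneg _))]

lemma gfun_integrableOn_Ioo (hν1 : -1 < ν.re) : IntegrableOn (gfun ν) (Set.Ioo (0:ℝ) 1) := by
  apply Integrable.mono' (integrableOn_rpow_Ioo hν1)
    ((gfun_contOn.mono (fun x hx => hx.1)).aestronglyMeasurable measurableSet_Ioo)
  filter_upwards [ae_restrict_mem measurableSet_Ioo] with t ht
  rw [gfun_norm ht.1]
  calc t ^ ν.re * (Real.sqrt (1+t^2))⁻¹ ≤ t ^ ν.re * 1 := by
        apply mul_le_mul_of_nonneg_left _ (le_of_lt (Real.rpow_pos_of_pos ht.1 _))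
        rw [inv_le_one_iff₀]
        right; exact one_le_sqrt_one_add_sq t
    _ = t ^ ν.re := mul_one _

lemma gfun_integrableOn_Ioi (hν2 : ν.re < 0) : IntegrableOn (gfun ν) (Set.Ioi (1:ℝ)) := by
  apply Integrable.mono' (integrableOn_Ioi_rpow_of_lt (a := ν.re - 1) (c := 1) (by linarith : ν.re - 1 < -1) one_pos)
    ((gfun_contOn.mono (fun x (hx : (1:ℝ) < x) => (lt_trans one_pos hx : (0:ℝ) < x))).aestronglyMeasurable measurableSet_Ioi)
  filter_upwards [ae_restrict_mem measurableSet_Ioi] with t ht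
  have ht0 : (0:ℝ) < t := lt_trans one_pos ht
  rw [gfun_norm ht0]
  have hsq : t ≤ Real.sqrt (1+t^2) := by
    apply (Real.le_sqrt ht0.le (by positivity)).mpr
    nlinarith
  calc t ^ ν.re * (Real.sqrt (1+t^2))⁻¹ ≤ t ^ ν.re * t⁻¹ := by
        apply mul_le_mul_of_nonneg_left _ (le_of_lt (Real.rpow_pos_of_pos ht0 _))
        exact inv_anti₀ ht0 hsq
    _ = t ^ (ν.re - 1) := by
        rw [Real.rpow_sub ht0, Real.rpow_one, div_eq_mul_inv]

lemma subst_inv : ∫ s in Set.Ioo (0:ℝ) 1, (s:ℂ)^(-ν-1) * ((Real.sqrt (1+s^2))⁻¹ : ℝ)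
    = ∫ t in Set.Ioi (1:ℝ), gfun ν t := by
  have himg : (fun t : ℝ => t⁻¹) '' Set.Ioi 1 = Set.Ioo 0 1 := by
    ext y
    constructor
    · rintro ⟨t, ht, rfl⟩
      exact ⟨inv_pos.mpr (lt_trans one_pos ht), inv_lt_one_of_one_lt₀ ht⟩
    · rintro ⟨hy0, hy1⟩
      exact ⟨y⁻¹, (one_lt_inv_iff₀).mpr ⟨hy0, hy1⟩, inv_inv y⟩
  have hder : ∀ t ∈ Set.Ioi (1:ℝ), HasDerivWithinAt (fun t : ℝ => t⁻¹) (-(t^2)⁻¹) (Set.Ioi 1) t :=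
    fun t ht => (hasDerivAt_inv (ne_of_gt (lt_trans one_pos ht))).hasDerivWithinAt
  have hinj : Set.InjOn (fun t : ℝ => t⁻¹) (Set.Ioi 1) := fun a _ b _ h => inv_injective h
  have key := MeasureTheory.integral_image_eq_integral_abs_deriv_smul measurableSet_Ioi hder hinj
    (fun s : ℝ => (s:ℂ)^(-ν-1) * ((Real.sqrt (1+s^2))⁻¹ : ℝ))
  rw [himg] at key
  rw [key]
  apply setIntegral_congr_fun measurableSet_Ioi
  intro t ht
  have ht1 : (1:ℝ) < t := ht
  have ht0 : (0:ℝ) < t := lt_trans one_pos ht1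
  have htne : (t:ℂ) ≠ 0 := Complex.ofReal_ne_zero.mpr (ne_of_gt ht0)
  have harg : (t:ℂ).arg ≠ π := by
    rw [Complex.arg_ofReal_of_nonneg ht0.le]
    exact Ne.symm Real.pi_ne_zero
  have e1 : |-((t:ℝ)^2)⁻¹| = ((t:ℝ)^2)⁻¹ := by
    rw [abs_neg, abs_inv, _root_.abs_of_pos (by positivity)]
  have e2 : Real.sqrt (1+(t⁻¹)^2) = Real.sqrt (1+t^2) * t⁻¹ := by
    have h : 1+(t⁻¹)^2 = (1+t^2) * (t⁻¹)^2 := by field_simp; ring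
    rw [h, Real.sqrt_mul (by positivity), Real.sqrt_sq (inv_nonneg.mpr ht0.le)]
  have e3 : ((t⁻¹:ℝ):ℂ)^(-ν-1) = (t:ℂ)^(ν+1) := by
    rw [Complex.ofReal_inv, Complex.inv_cpow _ _ harg,
      show (-ν-1 : ℂ) = -(ν+1) by ring, Complex.cpow_neg, inv_inv]
  have e4 : (t:ℂ)^(ν+1) = (t:ℂ)^ν * (t:ℂ) := by
    rw [Complex.cpow_add _ _ htne, Complex.cpow_one]
  dsimp only
  rw [e1, e2, e3, e4, Complex.real_smul, gfun]
  have hsne : (Real.sqrt (1+t^2) : ℝ) ≠ 0 := ne_of_gt (sqrt_one_add_sq_pos t)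
  have hsnec : ((Real.sqrt (1+t^2) : ℝ):ℂ) ≠ 0 := Complex.ofReal_ne_zero.mpr hsne
  push_cast
  have htnec : (t:ℂ) ≠ 0 := htne
  field_simp
  try ring

lemma split_union (hν1 : -1 < ν.re) (hν2 : ν.re < 0) :
    (∫ t in Set.Ioo (0:ℝ) 1, gfun ν t) + (∫ t in Set.Ioi (1:ℝ), gfun ν t)
      = ∫ t in Set.Ioi (0:ℝ), gfun ν t := by
  have hIci : ∫ t in Set.Ici (1:ℝ), gfun ν t = ∫ t in Set.Ioi (1:ℝ), gfun ν t :=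
    integral_Ici_eq_integral_Ioi
  rw [← hIci]
  rw [← MeasureTheory.setIntegral_union ?_ measurableSet_Ici (gfun_integrableOn_Ioo hν1)
    ((integrableOn_Ici_iff_integrableOn_Ioi).mpr (gfun_integrableOn_Ioi hν2))]
  · rw [Set.Ioo_union_Ici_eq_Ioi zero_lt_one]
  · rw [Set.disjoint_left]
    rintro x ⟨_, hx1⟩ hx2
    exact absurd hx2 (not_le.mpr hx1)

lemma subst_sq :
    ∫ t in Set.Ioi (0:ℝ), gfun ν t =
      (1/2 : ℂ) * ∫ u in Set.Ioi (0:ℝ), (u:ℂ)^((ν-1)/2) * ((Real.sqrt (1+u))⁻¹ : ℝ) := by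
  have key := MeasureTheory.integral_comp_rpow_Ioi
    (fun u : ℝ => (u:ℂ)^((ν-1)/2) * ((Real.sqrt (1+u))⁻¹ : ℝ)) (p := 2) two_ne_zero
  have hcongr : ∫ x in Set.Ioi (0:ℝ),
      (|(2:ℝ)| * x ^ ((2:ℝ) - 1)) • ((((x ^ (2:ℝ) : ℝ)):ℂ)^((ν-1)/2) *
        ((Real.sqrt (1+(x ^ (2:ℝ) : ℝ)))⁻¹ : ℝ) : ℂ) = ∫ x in Set.Ioi (0:ℝ), (2:ℂ) * gfun ν x := by
    apply setIntegral_congr_fun measurableSet_Ioi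
    intro x hx
    have hx0 : (0:ℝ) < x := hx
    have hxne : (x:ℂ) ≠ 0 := Complex.ofReal_ne_zero.mpr (ne_of_gt hx0)
    have hrp : (x : ℝ) ^ (2:ℝ) = x^2 := by
      rw [show (2:ℝ) = ((2:ℕ):ℝ) by norm_num, Real.rpow_natCast]
    have hlog : (Complex.log (x:ℂ) * 2).im = 0 := by
      simp [Complex.mul_im, Complex.log_im, Complex.arg_ofReal_of_nonneg hx0.le]
    have hb : (((x^2 : ℝ)):ℂ)^((ν-1)/2) = (x:ℂ)^(ν-1) := by
      rw [show ((x^2 : ℝ)) = x ^ (2:ℝ) from hrp.symm, Complex.ofReal_cpow hx0.le]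
      rw [show (((2:ℝ)):ℂ) = (2:ℂ) by norm_num]
      rw [← Complex.cpow_mul _ (by rw [hlog]; linarith [Real.pi_pos]) (by rw [hlog]; linarith [Real.pi_pos])]
      congr 1
      ring
    have hx1 : (x:ℂ)^(ν-1) * (x:ℂ) = (x:ℂ)^ν := by
      have h := Complex.cpow_add (ν-1) 1 hxne
      rw [Complex.cpow_one, show ν-1+1 = ν by ring] at h
      exact h.symm
    dsimp only
    rw [hrp, hb]
    rw [show ((2:ℝ)-1) = 1 by norm_num, Real.rpow_one, show |(2:ℝ)| = 2 by norm_num]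
    rw [Complex.real_smul, gfun, ← hx1]
    push_cast
    ring
  rw [hcongr] at key
  rw [MeasureTheory.integral_const_mul] at key
  linear_combination (1/2 : ℂ) * key

lemma subst_ratio (hν1 : -1 < ν.re) (hν2 : ν.re < 0) :
    ∫ u in Set.Ioi (0:ℝ), (u:ℂ)^((ν-1)/2) * ((Real.sqrt (1+u))⁻¹ : ℝ)
      = Complex.betaIntegral ((ν+1)/2) (-ν/2) := by
  have himg : (fun t : ℝ => t/(1-t)) '' Set.Ioo 0 1 = Set.Ioi 0 := by
    ext y
    constructor
    · rintro ⟨t, ⟨ht0, ht1⟩, rfl⟩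
      exact div_pos ht0 (by linarith)
    · intro hy
      have hy0 : (0:ℝ) < y := hy
      refine ⟨y/(1+y), ⟨div_pos hy0 (by linarith), ?_⟩, ?_⟩
      · rw [div_lt_one (by linarith)]; linarith
      · field_simp
        ring
  have hder : ∀ t ∈ Set.Ioo (0:ℝ) 1,
      HasDerivWithinAt (fun t : ℝ => t/(1-t)) (((1-t)^2)⁻¹) (Set.Ioo 0 1) t := by
    intro t ht
    have h1t : (1:ℝ) - t ≠ 0 := by nlinarith [ht.2]
    have := (hasDerivAt_id t).div ((hasDerivAt_const t (1:ℝ)).sub (hasDerivAt_id t)) h1t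
    refine this.hasDerivWithinAt.congr_deriv ?_
    symm
    simp only [id, Pi.sub_apply]
    field_simp
    ring
  have hinj : Set.InjOn (fun t : ℝ => t/(1-t)) (Set.Ioo 0 1) := by
    intro a ha b hb h
    have ha1 : (1:ℝ) - a ≠ 0 := by nlinarith [ha.2]
    have hb1 : (1:ℝ) - b ≠ 0 := by nlinarith [hb.2]
    field_simp at h
    nlinarith [h]
  have key := MeasureTheory.integral_image_eq_integral_abs_deriv_smul measurableSet_Ioo hder hinj
    (fun u : ℝ => (u:ℂ)^((ν-1)/2) * ((Real.sqrt (1+u))⁻¹ : ℝ))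
  rw [himg] at key
  rw [key, Complex.betaIntegral, intervalIntegral.integral_of_le zero_le_one,
    integral_Ioc_eq_integral_Ioo]
  apply setIntegral_congr_fun measurableSet_Ioo
  intro t ht
  obtain ⟨ht0, ht1⟩ := ht
  have h1t : (0:ℝ) < 1 - t := by linarith
  have htne : (t:ℂ) ≠ 0 := Complex.ofReal_ne_zero.mpr (ne_of_gt ht0)
  have hbne : ((1-t:ℝ):ℂ) ≠ 0 := Complex.ofReal_ne_zero.mpr (ne_of_gt h1t)
  have harg : ((1-t:ℝ):ℂ).arg ≠ π := by
    rw [Complex.arg_ofReal_of_nonneg h1t.le]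
    exact Ne.symm Real.pi_ne_zero
  have habs : |((1-t)^2)⁻¹| = ((1-t)^2)⁻¹ := by
    rw [abs_inv, _root_.abs_of_pos (by positivity)]
  have hplus : 1 + t/(1-t) = (1-t)⁻¹ := by field_simp; ring
  have hfrac : ((t/(1-t):ℝ):ℂ)^((ν-1)/2)
      = (t:ℂ)^((ν-1)/2) * ((1-t:ℝ):ℂ)^(-((ν-1)/2)) := by
    rw [div_eq_mul_inv, Complex.ofReal_mul, Complex.ofReal_inv]
    rw [show ((t:ℂ) * ((1-t:ℝ):ℂ)⁻¹) = ((t:ℝ):ℂ) * (((1-t)⁻¹:ℝ):ℂ) by push_cast; ring]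
    rw [Complex.mul_cpow_ofReal_nonneg ht0.le (inv_nonneg.mpr h1t.le)]
    congr 1
    rw [Complex.ofReal_inv, Complex.inv_cpow _ _ harg, ← Complex.cpow_neg]
  have hhalf : ((Real.sqrt (1-t):ℝ):ℂ) = ((1-t:ℝ):ℂ)^(1/2:ℂ) := by
    rw [Real.sqrt_eq_rpow, Complex.ofReal_cpow h1t.le]
    norm_num
  dsimp only
  rw [habs, hplus, Real.sqrt_inv, inv_inv, hfrac, hhalf, Complex.real_smul]
  have hpow2 : ((((1-t)^2)⁻¹ : ℝ):ℂ) = ((1-t:ℝ):ℂ)^(-(2:ℂ)) := by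
    rw [Complex.cpow_neg]
    congr 1
    rw [show (2:ℂ) = ((2:ℕ):ℂ) by norm_num, Complex.cpow_natCast]
    push_cast
    ring
  rw [hpow2]
  calc ((1-t:ℝ):ℂ)^(-(2:ℂ)) * ((t:ℂ)^((ν-1)/2) * ((1-t:ℝ):ℂ)^(-((ν-1)/2)) * ((1-t:ℝ):ℂ)^(1/2:ℂ))
      = (t:ℂ)^((ν-1)/2) * ((1-t:ℝ):ℂ)^(-(2:ℂ) + (-((ν-1)/2) + 1/2)) := by
        rw [Complex.cpow_add _ _ hbne, Complex.cpow_add _ _ hbne]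
        ring
    _ = (t:ℂ)^((ν+1)/2 - 1) * ((1:ℂ)-(t:ℂ))^(-ν/2 - 1) := by
        rw [show (-(2:ℂ) + (-((ν-1)/2) + 1/2)) = -ν/2 - 1 by ring,
          show ((ν-1)/2 : ℂ) = (ν+1)/2 - 1 by ring]
        push_cast
        ring


variable {ν : ℂ}

lemma re2m (m : ℕ) (z : ℂ) : (2*(m:ℂ) + z).re = 2*(m:ℝ) + z.re := by
  have h : (2*(m:ℂ) + z) = (((2*(m:ℝ) : ℝ)):ℂ) + z := by push_cast; ring
  rw [h, Complex.add_re, Complex.ofReal_re]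

lemma csinc_pair (m : ℕ) (hν1 : -1 < ν.re) (hν2 : ν.re < 0) :
    csinc (2 * (m : ℂ) - ν) + csinc (2 * (m : ℂ) + ν + 1) =
      (-Complex.sin ((π:ℂ)*ν)/π) * (1/(2*(m:ℂ) - ν) + 1/(2*(m:ℂ) + ν + 1)) := by
  have hπ : (π:ℂ) ≠ 0 := Complex.ofReal_ne_zero.mpr Real.pi_ne_zero
  have hre1 : (2*(m:ℂ) - ν).re = 2*(m:ℝ) - ν.re := by
    rw [show 2*(m:ℂ) - ν = 2*(m:ℂ) + (-ν) by ring, re2m, Complex.neg_re]; ring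
  have hre2 : (2*(m:ℂ) + ν + 1).re = 2*(m:ℝ) + ν.re + 1 := by
    rw [show 2*(m:ℂ) + ν + 1 = 2*(m:ℂ) + (ν+1) by ring, re2m, Complex.add_re,
      Complex.one_re]; ring
  have hmz : (0:ℝ) ≤ (m:ℝ) := Nat.cast_nonneg m
  have hz1 : (2*(m:ℂ) - ν) ≠ 0 := by
    intro h
    rw [h] at hre1
    simp only [Complex.zero_re] at hre1
    linarith
  have hz2 : (2*(m:ℂ) + ν + 1) ≠ 0 := by
    intro h
    rw [h] at hre2
    simp only [Complex.zero_re] at hre2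
    linarith
  have hs1 : Complex.sin ((π:ℂ)*(2*(m:ℂ) - ν)) = -Complex.sin ((π:ℂ)*ν) := by
    rw [show (π:ℂ)*(2*(m:ℂ) - ν) = -((π:ℂ)*ν) + ((m:ℤ):ℂ)*(2*(π:ℂ)) by push_cast; ring]
    rw [Complex.sin_add_int_mul_two_pi, Complex.sin_neg]
  have hs2 : Complex.sin ((π:ℂ)*(2*(m:ℂ) + ν + 1)) = -Complex.sin ((π:ℂ)*ν) := by
    rw [show (π:ℂ)*(2*(m:ℂ) + ν + 1) = ((π:ℂ)*ν + (π:ℂ)) + ((m:ℤ):ℂ)*(2*(π:ℂ)) by push_cast; ring]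
    rw [Complex.sin_add_int_mul_two_pi, Complex.sin_add_pi]
  rw [csinc_of_ne hz1, csinc_of_ne hz2, hs1, hs2]
  field_simp
  ring

theorem strip_eq (hν1 : -1 < ν.re) (hν2 : ν.re < 0) :
    ∑' m : ℕ, Fterm m ν =
      (Real.sqrt π : ℂ) / (Complex.Gamma ((1 - ν) / 2) * Complex.Gamma ((ν + 2) / 2)) := by
  have hπ : (π:ℂ) ≠ 0 := Complex.ofReal_ne_zero.mpr Real.pi_ne_zero
  set S := Complex.sin ((π:ℂ)*ν) with hS_def
  -- summabilities of the two families
  have hw1a : -1 < (-ν-1).re := by simp [Complex.sub_re, Complex.neg_re]; linarith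
  have hw1b : (-ν-1).re ≤ 1 := by simp [Complex.sub_re, Complex.neg_re]; linarith
  have hw2a : -1 < ν.re := hν1
  have hw2b : ν.re ≤ 1 := by linarith
  have hfamA0 := family_summable hw1a hw1b
  have hfamB := family_summable hw2a hw2b
  have heqA : (fun m : ℕ => coef m * (1/(2*(m:ℂ) + (-ν-1) + 1))) =
      (fun m : ℕ => coef m * (1/(2*(m:ℂ) - ν))) := by
    funext m; rw [show 2*(m:ℂ) + (-ν-1) + 1 = 2*(m:ℂ) - ν by ring]
  have hfamA : Summable (fun m : ℕ => coef m * (1/(2*(m:ℂ) - ν))) := heqA ▸ hfamA0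
  -- rewrite each term
  have hterm : ∀ m : ℕ, Fterm m ν =
      (-S/π) * (coef m * (1/(2*(m:ℂ) - ν))) + (-S/π) * (coef m * (1/(2*(m:ℂ) + ν + 1))) := by
    intro m
    rw [Fterm, csinc_pair m hν1 hν2, ← hS_def]
    ring
  calc ∑' m : ℕ, Fterm m ν
      = ∑' m : ℕ, ((-S/π) * (coef m * (1/(2*(m:ℂ) - ν)))
          + (-S/π) * (coef m * (1/(2*(m:ℂ) + ν + 1)))) := by
        congr 1; funext m; exact hterm m
    _ = (-S/π) * (∑' m : ℕ, coef m * (1/(2*(m:ℂ) - ν)))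
          + (-S/π) * (∑' m : ℕ, coef m * (1/(2*(m:ℂ) + ν + 1))) := by
        rw [Summable.tsum_add (hfamA.mul_left _) (hfamB.mul_left _), tsum_mul_left, tsum_mul_left]
    _ = (-S/π) * ((∑' m : ℕ, coef m * (1/(2*(m:ℂ) - ν)))
          + (∑' m : ℕ, coef m * (1/(2*(m:ℂ) + ν + 1)))) := by ring
    _ = (-S/π) * ((∫ t in Set.Ioi (1:ℝ), gfun ν t) + (∫ t in Set.Ioo (0:ℝ) 1, gfun ν t)) := by
        congr 2
        · rw [← heqA, family_eq hw1a hw1b, ← subst_inv]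
        · rw [family_eq hw2a hw2b]
          rfl
    _ = (-S/π) * ((1/2 : ℂ) * Complex.betaIntegral ((ν+1)/2) (-ν/2)) := by
        rw [add_comm, split_union hν1 hν2, subst_sq, subst_ratio hν1 hν2]
    _ = (Real.sqrt π : ℂ) / (Complex.Gamma ((1 - ν) / 2) * Complex.Gamma ((ν + 2) / 2)) := ?_
  -- Gamma algebra
  have hra : (0:ℝ) < ((ν+1)/2).re := by
    rw [show ((2:ℂ)) = ((2:ℝ):ℂ) by norm_num, Complex.div_ofReal_re, Complex.add_re,
      Complex.one_re]
    linarith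
  have hrb : (0:ℝ) < (-ν/2).re := by
    rw [show ((2:ℂ)) = ((2:ℝ):ℂ) by norm_num, Complex.div_ofReal_re, Complex.neg_re]
    linarith
  have hrc : (0:ℝ) < ((1-ν)/2).re := by
    rw [show ((2:ℂ)) = ((2:ℝ):ℂ) by norm_num, Complex.div_ofReal_re, Complex.sub_re,
      Complex.one_re]
    linarith
  have hrd : (0:ℝ) < ((ν+2)/2).re := by
    rw [show ((2:ℂ)) = ((2:ℝ):ℂ) by norm_num, Complex.div_ofReal_re, Complex.add_re]
    have : ((2:ℝ):ℂ).re = 2 := by norm_num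
    rw [this]
    linarith
  have hΓc : Complex.Gamma ((1-ν)/2) ≠ 0 := Complex.Gamma_ne_zero_of_re_pos hrc
  have hΓd : Complex.Gamma ((ν+2)/2) ≠ 0 := Complex.Gamma_ne_zero_of_re_pos hrd
  have hΓa : Complex.Gamma ((ν+1)/2) ≠ 0 := Complex.Gamma_ne_zero_of_re_pos hra
  have hΓb : Complex.Gamma (-ν/2) ≠ 0 := Complex.Gamma_ne_zero_of_re_pos hrb
  have R1 : Complex.Gamma ((1-ν)/2) * Complex.Gamma ((ν+1)/2)
      = (π:ℂ) / Complex.sin ((π:ℂ)*((1-ν)/2)) := by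
    have h := Complex.Gamma_mul_Gamma_one_sub ((1-ν)/2)
    rw [show (1:ℂ) - (1-ν)/2 = (ν+1)/2 by ring] at h
    exact h
  have R2 : Complex.Gamma ((ν+2)/2) * Complex.Gamma (-ν/2)
      = (π:ℂ) / Complex.sin ((π:ℂ)*((ν+2)/2)) := by
    have h := Complex.Gamma_mul_Gamma_one_sub ((ν+2)/2)
    rw [show (1:ℂ) - (ν+2)/2 = -ν/2 by ring] at h
    exact h
  have hsin1 : Complex.sin ((π:ℂ)*((1-ν)/2)) ≠ 0 := by
    intro h
    rw [h, div_zero] at R1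
    exact (mul_ne_zero hΓc hΓa) R1
  have hsin2 : Complex.sin ((π:ℂ)*((ν+2)/2)) ≠ 0 := by
    intro h
    rw [h, div_zero] at R2
    exact (mul_ne_zero hΓd hΓb) R2
  have hc_eq : Complex.sin ((π:ℂ)*((1-ν)/2)) = Complex.cos ((π:ℂ)*ν/2) := by
    rw [show (π:ℂ)*((1-ν)/2) = (π:ℂ)/2 - (π:ℂ)*ν/2 by ring, Complex.sin_pi_div_two_sub]
  have hd_eq : Complex.sin ((π:ℂ)*((ν+2)/2)) = -Complex.sin ((π:ℂ)*ν/2) := by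
    rw [show (π:ℂ)*((ν+2)/2) = (π:ℂ)*ν/2 + π by ring, Complex.sin_add_pi]
  have hcos : Complex.cos ((π:ℂ)*ν/2) ≠ 0 := hc_eq ▸ hsin1
  have hsin : Complex.sin ((π:ℂ)*ν/2) ≠ 0 := by
    intro h
    apply hsin2
    rw [hd_eq, h, neg_zero]
  have hS2 : S = 2 * Complex.sin ((π:ℂ)*ν/2) * Complex.cos ((π:ℂ)*ν/2) := by
    have h := Complex.sin_two_mul ((π:ℂ)*ν/2)
    rw [show 2*((π:ℂ)*ν/2) = (π:ℂ)*ν by ring] at h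
    rw [hS_def, h]
  have hgam : Complex.Gamma (1/2) = ((Real.sqrt π : ℝ) : ℂ) := by
    rw [Complex.Gamma_one_half_eq, show (1/2:ℂ) = ((1/2:ℝ):ℂ) by norm_num,
      ← Complex.ofReal_cpow Real.pi_nonneg, ← Real.sqrt_eq_rpow]
  have hsq : ((Real.sqrt π : ℝ):ℂ) * ((Real.sqrt π : ℝ):ℂ) = (π:ℂ) := by
    rw [← Complex.ofReal_mul, Real.mul_self_sqrt Real.pi_nonneg]
  have hsπ : ((Real.sqrt π : ℝ):ℂ) ≠ 0 :=
    Complex.ofReal_ne_zero.mpr (ne_of_gt (Real.sqrt_pos.mpr Real.pi_pos))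
  have hΓH : Complex.Gamma (1/2) ≠ 0 := by rw [hgam]; exact hsπ
  have hB : Complex.Gamma ((ν+1)/2) * Complex.Gamma (-ν/2) =
      Complex.Gamma (1/2) * Complex.betaIntegral ((ν+1)/2) (-ν/2) := by
    have h := Complex.Gamma_mul_Gamma_eq_betaIntegral hra hrb
    rw [show (ν+1)/2 + (-ν/2) = 1/2 by ring] at h
    exact h
  have hβ : Complex.betaIntegral ((ν+1)/2) (-ν/2) =
      Complex.Gamma ((ν+1)/2) * Complex.Gamma (-ν/2) / Complex.Gamma (1/2) := by
    rw [hB]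
    field_simp
  rw [eq_div_iff (mul_ne_zero hΓc hΓd), hβ]
  calc (-S/π) * ((1/2 : ℂ) * (Complex.Gamma ((ν+1)/2) * Complex.Gamma (-ν/2) / Complex.Gamma (1/2)))
        * (Complex.Gamma ((1-ν)/2) * Complex.Gamma ((ν+2)/2))
      = (-S/π) * (1/2 : ℂ) * (1/Complex.Gamma (1/2)) *
          ((Complex.Gamma ((1-ν)/2) * Complex.Gamma ((ν+1)/2))
            * (Complex.Gamma ((ν+2)/2) * Complex.Gamma (-ν/2))) := by ring
    _ = (Real.sqrt π : ℂ) := by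
        rw [R1, R2, hc_eq, hd_eq, hS2, hgam]
        field_simp
        linear_combination (-1:ℂ) * hsq


theorem dougall_at_half (ν : ℂ) :
    (Real.sqrt π : ℂ) / (Complex.Gamma ((1 - ν) / 2) * Complex.Gamma ((ν + 2) / 2)) =
      ∑' m : ℕ, ((2 * m).choose m : ℂ) * (-1) ^ m / 4 ^ m *
        (csinc (2 * (m : ℂ) - ν) + csinc (2 * (m : ℂ) + ν + 1)) := by
  set L : ℂ → ℂ := fun ν => (Real.sqrt π : ℂ) /
    (Complex.Gamma ((1 - ν) / 2) * Complex.Gamma ((ν + 2) / 2)) with hL_def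
  set R : ℂ → ℂ := fun ν => ∑' m : ℕ, Fterm m ν with hR_def
  have hL : Differentiable ℂ L := by
    have hrw : L = fun ν => (Real.sqrt π : ℂ) *
        ((Complex.Gamma ((1 - ν) / 2))⁻¹ * (Complex.Gamma ((ν + 2) / 2))⁻¹) := by
      funext z
      simp only [hL_def]
      rw [div_eq_mul_inv ((Real.sqrt π : ℝ):ℂ), mul_inv]
    rw [hrw]
    apply Differentiable.const_mul
    apply Differentiable.mul
    · exact Complex.differentiable_one_div_Gamma.comp
        (((differentiable_const (1:ℂ)).sub differentiable_id).div_const 2)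
    · exact Complex.differentiable_one_div_Gamma.comp
        ((differentiable_id.add (differentiable_const (2:ℂ))).div_const 2)
  have hR : Differentiable ℂ R := differentiable_RHS
  have hU : IsOpen {z : ℂ | -1 < z.re ∧ z.re < 0} := by
    have : {z : ℂ | -1 < z.re ∧ z.re < 0} = Complex.re ⁻¹' (Set.Ioo (-1) 0) := rfl
    rw [this]
    exact isOpen_Ioo.preimage Complex.continuous_re
  have hz₀ : ((-1/2 : ℝ) : ℂ) ∈ {z : ℂ | -1 < z.re ∧ z.re < 0} := by
    constructor <;> · rw [Complex.ofReal_re]; norm_num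
  have hev : L =ᶠ[nhds ((-1/2 : ℝ) : ℂ)] R :=
    Filter.eventuallyEq_of_mem (hU.mem_nhds hz₀)
      (fun z hz => (strip_eq hz.1 hz.2).symm)
  have heq : Set.EqOn L R Set.univ :=
    AnalyticOnNhd.eqOn_of_preconnected_of_eventuallyEq
      (hL.differentiableOn.analyticOnNhd isOpen_univ)
      (hR.differentiableOn.analyticOnNhd isOpen_univ)
      isPreconnected_univ (Set.mem_univ _) hev
  exact heq (Set.mem_univ ν)
end
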